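/- arXiv:2603.29556 — 4 statements merged into one kernel-verified Lean document; each statement's English description precedes it below -/
import Mathlib

section
/- The transpose map T : M_n(ℂ) → M_n(ℂ) is a positive unital isometry whose completely bounded norm equals n. -/
open Matrix ComplexOrder
open scoped Matrix.Norms.L2Operator

/-- The `k`-th amplification `Id_{M_k} ⊗ φ` of a map `φ : Mₙ(ℂ) → M_m(ℂ)`, regarded as a map
of matrices indexed by products. -/
def amp {n m : ℕ} (φ : Matrix (Fin n) (Fin n) ℂ → Matrix (Fin m) (Fin m) ℂ) (k : ℕ)
    (M : Matrix (Fin k × Fin n) (Fin k × Fin n) ℂ) :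
    Matrix (Fin k × Fin m) (Fin k × Fin m) ℂ :=
  fun p q => φ (fun a b => M (p.1, a) (q.1, b)) p.2 q.2

section Aux

set_option linter.unusedSectionVars false
set_option maxHeartbeats 1000000

variable {ι κ : Type*} [Fintype ι] [Fintype κ] [DecidableEq ι] [DecidableEq κ]

lemma aux_opNorm_le_of_mulVec (A : Matrix ι κ ℂ) {C : ℝ} (hC : 0 ≤ C)
    (h : ∀ x : EuclideanSpace ℂ κ, ‖(WithLp.equiv 2 (ι → ℂ)).symm (A *ᵥ x)‖ ≤ C * ‖x‖) :
    ‖A‖ ≤ C := by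
  rw [Matrix.l2_opNorm_def]
  refine ContinuousLinearMap.opNorm_le_bound _ hC fun x => ?_
  simpa [Matrix.toEuclideanLin_apply] using h x

lemma aux_norm_mulVec_le (A : Matrix ι κ ℂ) (x : EuclideanSpace ℂ κ) :
    ‖(WithLp.equiv 2 (ι → ℂ)).symm (A *ᵥ x)‖ ≤ ‖A‖ * ‖x‖ :=
  A.l2_opNorm_mulVec x

lemma aux_euclid_norm_eq {v w : ι → ℂ} (h : ∀ i, ‖v i‖ = ‖w i‖) :
    ‖(WithLp.equiv 2 (ι → ℂ)).symm v‖ = ‖(WithLp.equiv 2 (ι → ℂ)).symm w‖ := by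
  rw [EuclideanSpace.norm_eq, EuclideanSpace.norm_eq]
  simp only [WithLp.equiv_symm_apply, PiLp.toLp_apply]
  congr 1
  exact Finset.sum_congr rfl fun i _ => by rw [h i]

lemma aux_norm_map_star_le (A : Matrix ι κ ℂ) : ‖A.map star‖ ≤ ‖A‖ := by
  refine aux_opNorm_le_of_mulVec _ (norm_nonneg _) fun x => ?_
  have key : ∀ i, (A.map star *ᵥ (x : κ → ℂ)) i
      = star ((A *ᵥ ((WithLp.equiv 2 (κ → ℂ)).symm (star (x : κ → ℂ)) : κ → ℂ)) i) := by
    intro i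
    simp [Matrix.mulVec, dotProduct, Matrix.map_apply, star_sum, Finset.sum_congr]
  have h1 : ‖(WithLp.equiv 2 (ι → ℂ)).symm (A.map star *ᵥ (x : κ → ℂ))‖
      = ‖(WithLp.equiv 2 (ι → ℂ)).symm
          (A *ᵥ ((WithLp.equiv 2 (κ → ℂ)).symm (star (x : κ → ℂ)) : κ → ℂ))‖ := by
    refine aux_euclid_norm_eq fun i => ?_
    rw [key i, norm_star]
  have h2 : ‖((WithLp.equiv 2 (κ → ℂ)).symm (star (x : κ → ℂ)))‖ = ‖x‖ := by
    rw [EuclideanSpace.norm_eq, EuclideanSpace.norm_eq]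
    congr 1
    refine Finset.sum_congr rfl fun i _ => by simp
  calc ‖(WithLp.equiv 2 (ι → ℂ)).symm (A.map star *ᵥ (x : κ → ℂ))‖
      = _ := h1
    _ ≤ ‖A‖ * ‖(WithLp.equiv 2 (κ → ℂ)).symm (star (x : κ → ℂ))‖ := aux_norm_mulVec_le _ _
    _ = ‖A‖ * ‖x‖ := by rw [h2]

lemma aux_norm_map_star (A : Matrix ι κ ℂ) : ‖A.map star‖ = ‖A‖ := by
  refine le_antisymm (aux_norm_map_star_le A) ?_
  have := aux_norm_map_star_le (A.map star)
  have hA : (A.map star).map star = A := by ext i j; simp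
  rwa [hA] at this

lemma aux_norm_transpose (A : Matrix ι κ ℂ) : ‖Aᵀ‖ = ‖A‖ := by
  have h : Aᵀ = (A.map star)ᴴ := by ext i j; simp [Matrix.conjTranspose_apply]
  rw [h, Matrix.l2_opNorm_conjTranspose, aux_norm_map_star]

lemma aux_amp_transpose_norm_le (n k : ℕ) (M : Matrix (Fin k × Fin n) (Fin k × Fin n) ℂ) :
    ‖amp (fun x => x.transpose) k M‖ ≤ (n : ℝ) * ‖M‖ := by
  refine aux_opNorm_le_of_mulVec _ (by positivity) fun x => ?_
  set N := amp (fun x : Matrix (Fin n) (Fin n) ℂ => x.transpose) k M with hNdef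
  set v : Fin n → Fin n → EuclideanSpace ℂ (Fin k × Fin n) :=
    fun c d => (WithLp.equiv 2 (Fin k × Fin n → ℂ)).symm
      (fun p => if p.2 = c then x (p.1, d) else 0) with hv
  have hkey : ∀ i c, (N *ᵥ (x : Fin k × Fin n → ℂ)) (i, c)
      = ∑ d, (M *ᵥ (v c d : Fin k × Fin n → ℂ)) (i, d) := by
    intro i c
    have lhs : (N *ᵥ (x : Fin k × Fin n → ℂ)) (i, c)
        = ∑ j, ∑ d, M (i, d) (j, c) * x (j, d) := by
      simp only [Matrix.mulVec, dotProduct, Fintype.sum_prod_type, hNdef, amp,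
        Matrix.transpose_apply]
      rfl
    have rhs : ∀ d, (M *ᵥ (v c d : Fin k × Fin n → ℂ)) (i, d)
        = ∑ j, M (i, d) (j, c) * x (j, d) := by
      intro d
      simp only [Matrix.mulVec, dotProduct, hv, WithLp.equiv_symm_apply, PiLp.toLp_apply,
        Fintype.sum_prod_type, mul_ite, mul_zero]
      simp
    rw [lhs, Finset.sum_comm]
    exact Finset.sum_congr rfl fun d _ => (rhs d).symm
  have hvnorm : ∀ c d, ‖v c d‖ ^ 2 = ∑ j, ‖x (j, d)‖ ^ 2 := by
    intro c d
    rw [PiLp.norm_sq_eq_of_L2]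
    rw [Fintype.sum_prod_type_right]
    simp only [hv, WithLp.equiv_symm_apply, PiLp.toLp_apply]
    rw [Finset.sum_comm]
    refine Finset.sum_congr rfl fun j _ => ?_
    rw [Finset.sum_eq_single c]
    · simp
    · intro b _ hb; simp [hb]
    · intro h; exact absurd (Finset.mem_univ c) h
  have hxnorm : ‖x‖ ^ 2 = ∑ d, ∑ j, ‖x (j, d)‖ ^ 2 := by
    rw [PiLp.norm_sq_eq_of_L2, Fintype.sum_prod_type_right]
  have hMv : ∀ c d, ∑ i, ‖(M *ᵥ (v c d : Fin k × Fin n → ℂ)) (i, d)‖ ^ 2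
      ≤ (‖M‖ * ‖v c d‖) ^ 2 := by
    intro c d
    have h1 : ∑ i, ‖(M *ᵥ (v c d : Fin k × Fin n → ℂ)) (i, d)‖ ^ 2
        ≤ ∑ p : Fin k × Fin n, ‖(M *ᵥ (v c d : Fin k × Fin n → ℂ)) p‖ ^ 2 := by
      rw [Fintype.sum_prod_type_right]
      exact Finset.single_le_sum
        (f := fun a => ∑ i, ‖(M *ᵥ (v c d : Fin k × Fin n → ℂ)) (i, a)‖ ^ 2)
        (fun a _ => by positivity) (Finset.mem_univ d)
    have h2 : ∑ p : Fin k × Fin n, ‖(M *ᵥ (v c d : Fin k × Fin n → ℂ)) p‖ ^ 2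
        = ‖(WithLp.equiv 2 (Fin k × Fin n → ℂ)).symm
            (M *ᵥ (v c d : Fin k × Fin n → ℂ))‖ ^ 2 := by
      rw [PiLp.norm_sq_eq_of_L2]; rfl
    have h3 := aux_norm_mulVec_le M (v c d)
    calc ∑ i, ‖(M *ᵥ (v c d : Fin k × Fin n → ℂ)) (i, d)‖ ^ 2
        ≤ _ := h1
      _ = _ := h2
      _ ≤ (‖M‖ * ‖v c d‖) ^ 2 := pow_le_pow_left₀ (norm_nonneg _) h3 2
  have main : ‖(WithLp.equiv 2 (Fin k × Fin n → ℂ)).symm (N *ᵥ (x : Fin k × Fin n → ℂ))‖ ^ 2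
      ≤ ((n : ℝ) * ‖M‖ * ‖x‖) ^ 2 := by
    rw [PiLp.norm_sq_eq_of_L2]
    calc ∑ p : Fin k × Fin n,
          ‖((WithLp.equiv 2 (Fin k × Fin n → ℂ)).symm (N *ᵥ (x : Fin k × Fin n → ℂ)) :
            EuclideanSpace ℂ (Fin k × Fin n)) p‖ ^ 2
        = ∑ i, ∑ c, ‖(N *ᵥ (x : Fin k × Fin n → ℂ)) (i, c)‖ ^ 2 := by
          simp only [WithLp.equiv_symm_apply, PiLp.toLp_apply]
          rw [Fintype.sum_prod_type]
      _ ≤ ∑ i, ∑ c, (n : ℝ) * ∑ d, ‖(M *ᵥ (v c d : Fin k × Fin n → ℂ)) (i, d)‖ ^ 2 := by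
          refine Finset.sum_le_sum fun i _ => Finset.sum_le_sum fun c _ => ?_
          rw [hkey i c]
          calc ‖∑ d, (M *ᵥ (v c d : Fin k × Fin n → ℂ)) (i, d)‖ ^ 2
              ≤ (∑ d, ‖(M *ᵥ (v c d : Fin k × Fin n → ℂ)) (i, d)‖) ^ 2 :=
                pow_le_pow_left₀ (norm_nonneg _) (norm_sum_le _ _) 2
            _ ≤ (Finset.univ.card : ℝ) * ∑ d, ‖(M *ᵥ (v c d : Fin k × Fin n → ℂ)) (i, d)‖ ^ 2 :=
                sq_sum_le_card_mul_sum_sq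
            _ = (n : ℝ) * ∑ d, ‖(M *ᵥ (v c d : Fin k × Fin n → ℂ)) (i, d)‖ ^ 2 := by
                simp
      _ = (n : ℝ) * ∑ c, ∑ d, ∑ i, ‖(M *ᵥ (v c d : Fin k × Fin n → ℂ)) (i, d)‖ ^ 2 := by
          simp_rw [← Finset.mul_sum]
          congr 1
          rw [Finset.sum_comm]
          exact Finset.sum_congr rfl fun c _ => Finset.sum_comm
      _ ≤ (n : ℝ) * ∑ c, ∑ d, (‖M‖ * ‖v c d‖) ^ 2 := by
          have hle := Finset.sum_le_sum fun c (_ : c ∈ Finset.univ) =>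
            Finset.sum_le_sum fun d (_ : d ∈ (Finset.univ : Finset (Fin n))) => hMv c d
          exact mul_le_mul_of_nonneg_left hle (by positivity)
      _ = ((n : ℝ) * ‖M‖ * ‖x‖) ^ 2 := by
          simp_rw [mul_pow, hvnorm]
          rw [← Finset.mul_sum]
          rw [Finset.sum_const, Finset.card_univ, Fintype.card_fin]
          rw [nsmul_eq_mul, ← hxnorm]
          ring
  have h0 : (0 : ℝ) ≤ (n : ℝ) * ‖M‖ * ‖x‖ := by positivity
  nlinarith [norm_nonneg
    ((WithLp.equiv 2 (Fin k × Fin n → ℂ)).symm (N *ᵥ (x : Fin k × Fin n → ℂ)))]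

lemma aux_cb_lower (n : ℕ) (hn : 0 < n) (c : ℝ)
    (h : ∀ (k : ℕ) (M : Matrix (Fin k × Fin n) (Fin k × Fin n) ℂ),
      ‖amp (fun x => x.transpose) k M‖ ≤ c * ‖M‖) : (n : ℝ) ≤ c := by
  set S : Matrix (Fin n × Fin n) (Fin n × Fin n) ℂ :=
    fun p q => if p.1 = q.2 ∧ p.2 = q.1 then 1 else 0 with hS
  have hSle : ‖S‖ ≤ 1 := by
    refine aux_opNorm_le_of_mulVec _ zero_le_one fun x => ?_
    have hmv : ∀ p : Fin n × Fin n, (S *ᵥ (x : Fin n × Fin n → ℂ)) p = x (p.2, p.1) := by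
      intro p
      simp only [Matrix.mulVec, dotProduct, hS]
      rw [Finset.sum_eq_single (p.2, p.1)]
      · simp
      · intro q _ hq
        have : ¬(p.1 = q.2 ∧ p.2 = q.1) := by
          rintro ⟨h1, h2⟩; exact hq (by ext <;> simp [← h1, ← h2])
        simp [this]
      · intro h; exact absurd (Finset.mem_univ _) h
    have : ‖(WithLp.equiv 2 (Fin n × Fin n → ℂ)).symm
        (S *ᵥ (x : Fin n × Fin n → ℂ))‖ ^ 2 = ‖x‖ ^ 2 := by
      rw [PiLp.norm_sq_eq_of_L2, PiLp.norm_sq_eq_of_L2]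
      simp only [WithLp.equiv_symm_apply, PiLp.toLp_apply, hmv]
      exact Fintype.sum_equiv (Equiv.prodComm _ _) _ _ fun p => rfl
    have hnn := norm_nonneg
      ((WithLp.equiv 2 (Fin n × Fin n → ℂ)).symm (S *ᵥ (x : Fin n × Fin n → ℂ)))
    have hx := norm_nonneg x
    nlinarith
  set N := amp (fun x : Matrix (Fin n) (Fin n) ℂ => x.transpose) n S with hN
  have hNapp : ∀ p q : Fin n × Fin n, N p q = if p.1 = p.2 ∧ q.2 = q.1 then 1 else 0 := by
    intro p q
    simp only [hN, amp, Matrix.transpose_apply, hS]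
    rfl
  set y : EuclideanSpace ℂ (Fin n × Fin n) :=
    (WithLp.equiv 2 (Fin n × Fin n → ℂ)).symm (fun p => if p.1 = p.2 then 1 else 0) with hy
  have hyn : ‖y‖ ^ 2 = (n : ℝ) := by
    rw [PiLp.norm_sq_eq_of_L2]
    simp only [hy, WithLp.equiv_symm_apply, PiLp.toLp_apply, apply_ite (fun z : ℂ => ‖z‖ ^ 2)]
    rw [Fintype.sum_prod_type]
    simp [Finset.sum_ite_eq']
  have hNy : ∀ p : Fin n × Fin n, (N *ᵥ (y : Fin n × Fin n → ℂ)) p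
      = if p.1 = p.2 then (n : ℂ) else 0 := by
    intro p
    simp only [Matrix.mulVec, dotProduct, hNapp, hy, WithLp.equiv_symm_apply, PiLp.toLp_apply]
    by_cases hp : p.1 = p.2
    · simp only [hp, true_and, if_pos, ite_mul, one_mul, zero_mul]
      rw [Fintype.sum_prod_type]
      simp [Finset.sum_ite_eq, eq_comm]
    · simp [hp]
  have hNyn : ‖(WithLp.equiv 2 (Fin n × Fin n → ℂ)).symm (N *ᵥ (y : Fin n × Fin n → ℂ))‖ ^ 2
      = (n : ℝ) ^ 3 := by
    rw [PiLp.norm_sq_eq_of_L2]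
    simp only [WithLp.equiv_symm_apply, PiLp.toLp_apply, hNy, apply_ite (fun z : ℂ => ‖z‖ ^ 2)]
    rw [Fintype.sum_prod_type]
    simp [Finset.sum_ite_eq', Complex.norm_natCast]
    ring
  have hmv := aux_norm_mulVec_le N y
  have hNlow : (n : ℝ) ≤ ‖N‖ := by
    have hNn := norm_nonneg N
    have hyn0 := norm_nonneg y
    have hLn := norm_nonneg
      ((WithLp.equiv 2 (Fin n × Fin n → ℂ)).symm (N *ᵥ (y : Fin n × Fin n → ℂ)))
    have hnpos : (0 : ℝ) < n := by exact_mod_cast hn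
    have h1 := mul_le_mul hmv hmv hLn (mul_nonneg hNn hyn0)
    have h2 : (n : ℝ) ^ 3 ≤ ‖N‖ ^ 2 * (n : ℝ) := by
      calc (n : ℝ) ^ 3
          = ‖(WithLp.equiv 2 (Fin n × Fin n → ℂ)).symm
              (N *ᵥ (y : Fin n × Fin n → ℂ))‖ ^ 2 := hNyn.symm
        _ = ‖(WithLp.equiv 2 (Fin n × Fin n → ℂ)).symm (N *ᵥ (y : Fin n × Fin n → ℂ))‖ *
            ‖(WithLp.equiv 2 (Fin n × Fin n → ℂ)).symm (N *ᵥ (y : Fin n × Fin n → ℂ))‖ := sq _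
        _ ≤ (‖N‖ * ‖y‖) * (‖N‖ * ‖y‖) := h1
        _ = ‖N‖ ^ 2 * ‖y‖ ^ 2 := by ring
        _ = ‖N‖ ^ 2 * (n : ℝ) := by rw [hyn]
    by_contra hlt
    push_neg at hlt
    have h4 : ‖N‖ ^ 2 < (n : ℝ) ^ 2 := by nlinarith [hNn, hlt]
    have h3 : ‖N‖ ^ 2 * (n : ℝ) < (n : ℝ) ^ 3 := by nlinarith [h4, hnpos]
    linarith
  have hcN := h n S
  rw [← hN] at hcN
  have hnpos : (0 : ℝ) < n := by exact_mod_cast hn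
  have hc0 : 0 ≤ c := by nlinarith [norm_nonneg S]
  calc (n : ℝ) ≤ ‖N‖ := hNlow
    _ ≤ c * ‖S‖ := hcN
    _ ≤ c * 1 := mul_le_mul_of_nonneg_left hSle hc0
    _ = c := mul_one c

end Aux

/-- the transpose map `T : Mₙ(ℂ) → Mₙ(ℂ)` is a positive unital isometry
(for the operator norm) whose completely bounded norm equals `n`:
`n` bounds all amplifications and is the least such bound. -/
theorem stmt6 (n : ℕ) (hn : 0 < n) :
    (∀ M : Matrix (Fin n) (Fin n) ℂ, M.PosSemidef → M.transpose.PosSemidef) ∧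
    (1 : Matrix (Fin n) (Fin n) ℂ).transpose = 1 ∧
    (∀ M : Matrix (Fin n) (Fin n) ℂ, ‖M.transpose‖ = ‖M‖) ∧
    (∀ (k : ℕ) (M : Matrix (Fin k × Fin n) (Fin k × Fin n) ℂ),
      ‖amp (fun x => x.transpose) k M‖ ≤ (n : ℝ) * ‖M‖) ∧
    (∀ c : ℝ, (∀ (k : ℕ) (M : Matrix (Fin k × Fin n) (Fin k × Fin n) ℂ),
      ‖amp (fun x => x.transpose) k M‖ ≤ c * ‖M‖) → (n : ℝ) ≤ c) := by
  refine ⟨fun M hM => hM.transpose, Matrix.transpose_one, fun M => aux_norm_transpose M,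
    fun k M => aux_amp_transpose_norm_le n k M, fun c hc => aux_cb_lower n hn c hc⟩
end

section
/- Let Ψ : M_n(ℂ) → M_m(ℂ) be a linear map admitting completely positive maps Φ₁, Φ₂ : M_n(ℂ) → M_m(ℂ) such that the block matrix [[Choi(Φ₁), Choi(Ψ)],[Choi(Ψ)*, Choi(Φ₂)]] is positive. Then ‖Ψ‖_cb ≤ √(‖Φ₁‖ · ‖Φ₂‖). -/
open Matrix ComplexOrder
open scoped Matrix.Norms.L2Operator InnerProductSpace

/-- Complete positivity of `φ : Mₙ(ℂ) → M_m(ℂ)`. -/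
def IsCompletelyPositive {n m : ℕ}
    (φ : Matrix (Fin n) (Fin n) ℂ → Matrix (Fin m) (Fin m) ℂ) : Prop :=
  ∀ (k : ℕ) (M : Matrix (Fin k × Fin n) (Fin k × Fin n) ℂ),
    M.PosSemidef → (amp φ k M).PosSemidef

/-- The Choi matrix `∑ᵢⱼ eᵢⱼ ⊗ φ(eᵢⱼ) ∈ Mₙ ⊗ M_m` of `φ : Mₙ(ℂ) → M_m(ℂ)`. -/
def choi {n m : ℕ} (φ : Matrix (Fin n) (Fin n) ℂ →ₗ[ℂ] Matrix (Fin m) (Fin m) ℂ) :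
    Matrix (Fin n × Fin m) (Fin n × Fin m) ℂ :=
  fun p q => φ (Matrix.single p.1 q.1 1) p.2 q.2

private lemma sum4comm {ι ρ σ : Type*} [Fintype ι] [Fintype ρ] [Fintype σ]
    (f : ι → ι → ρ → σ → ℂ) :
    ∑ a, ∑ b, ∑ r, ∑ s, f a b r s = ∑ r, ∑ s, ∑ a, ∑ b, f a b r s := by
  calc ∑ a, ∑ b, ∑ r, ∑ s, f a b r s
      = ∑ a, ∑ r, ∑ b, ∑ s, f a b r s :=
        Finset.sum_congr rfl fun a _ => Finset.sum_comm
    _ = ∑ r, ∑ a, ∑ b, ∑ s, f a b r s := Finset.sum_comm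
    _ = ∑ r, ∑ a, ∑ s, ∑ b, f a b r s :=
        Finset.sum_congr rfl fun r _ => Finset.sum_congr rfl fun a _ => Finset.sum_comm
    _ = ∑ r, ∑ s, ∑ a, ∑ b, f a b r s :=
        Finset.sum_congr rfl fun r _ => Finset.sum_comm

open scoped MatrixOrder in
lemma psd_factor {ρ : Type*} [Fintype ρ] {N : Matrix ρ ρ ℂ} (hN : N.PosSemidef) :
    ∃ L : Matrix ρ ρ ℂ, N = Lᴴ * L := by
  classical
  obtain ⟨L, hL⟩ := CStarAlgebra.nonneg_iff_eq_star_mul_self.mp hN.nonneg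
  exact ⟨L, hL⟩

lemma bigPos {ι κ ρ σ : Type*} [Fintype ι] [Fintype κ] [Fintype ρ] [Fintype σ]
    {N : Matrix ρ ρ ℂ} {C : Matrix σ σ ℂ} (hN : N.PosSemidef) (hC : C.PosSemidef)
    (u : κ → ι → ρ) (v : κ → ι → σ) :
    (Matrix.of fun p q : κ => ∑ a : ι, ∑ b : ι,
      N (u p a) (u q b) * C (v p a) (v q b)).PosSemidef := by
  obtain ⟨L, hL⟩ := psd_factor hN
  obtain ⟨K, hK⟩ := psd_factor hC
  have : (Matrix.of fun p q : κ => ∑ a : ι, ∑ b : ι,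
      N (u p a) (u q b) * C (v p a) (v q b)) =
      (Matrix.of fun (rs : ρ × σ) (p : κ) =>
        ∑ a : ι, L rs.1 (u p a) * K rs.2 (v p a))ᴴ *
      (Matrix.of fun (rs : ρ × σ) (p : κ) =>
        ∑ a : ι, L rs.1 (u p a) * K rs.2 (v p a)) := by
    ext p q
    simp only [Matrix.mul_apply, Matrix.conjTranspose_apply, Matrix.of_apply, hL, hK,
      Fintype.sum_prod_type, star_sum, star_mul']
    calc ∑ a : ι, ∑ b : ι,
          (∑ r, star (L r (u p a)) * L r (u q b)) * (∑ s, star (K s (v p a)) * K s (v q b))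
        = ∑ a : ι, ∑ b : ι, ∑ r, ∑ s,
            (star (L r (u p a)) * L r (u q b)) * (star (K s (v p a)) * K s (v q b)) := by
          refine Finset.sum_congr rfl fun a _ => Finset.sum_congr rfl fun b _ => ?_
          rw [Finset.sum_mul_sum]
      _ = ∑ r, ∑ s, ∑ a : ι, ∑ b : ι,
            (star (L r (u p a)) * L r (u q b)) * (star (K s (v p a)) * K s (v q b)) :=
          sum4comm _
      _ = ∑ r, ∑ s, (∑ a : ι, star (L r (u p a)) * star (K s (v p a))) *
            (∑ b : ι, L r (u q b) * K s (v q b)) := by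
          refine Finset.sum_congr rfl fun r _ => Finset.sum_congr rfl fun s _ => ?_
          rw [Finset.sum_mul_sum]
          refine Finset.sum_congr rfl fun a _ => Finset.sum_congr rfl fun b _ => ?_
          ring
  rw [this]
  exact Matrix.posSemidef_conjTranspose_mul_self _

lemma amp_entry {n m k : ℕ} (φ : Matrix (Fin n) (Fin n) ℂ →ₗ[ℂ] Matrix (Fin m) (Fin m) ℂ)
    (M : Matrix (Fin k × Fin n) (Fin k × Fin n) ℂ) (p q : Fin k × Fin m) :
    amp (φ ·) k M p q =
      ∑ a, ∑ b, M (p.1, a) (q.1, b) * choi φ (a, p.2) (b, q.2) := by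
  show φ (fun a b => M (p.1, a) (q.1, b)) p.2 q.2 = _
  have h : (fun a b => M (p.1, a) (q.1, b)) =
      ∑ a : Fin n, ∑ b : Fin n, M (p.1, a) (q.1, b) • Matrix.single a b (1 : ℂ) := by
    conv_lhs => rw [show (fun a b => M (p.1, a) (q.1, b)) =
        Matrix.of (fun a b => M (p.1, a) (q.1, b)) from rfl,
      matrix_eq_sum_single (Matrix.of fun a b => M (p.1, a) (q.1, b))]
    refine Finset.sum_congr rfl fun a _ => Finset.sum_congr rfl fun b _ => ?_
    rw [Matrix.smul_single, smul_eq_mul, mul_one]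
    rfl
  rw [h]
  simp only [map_sum, _root_.map_smul, Finset.sum_apply, Matrix.sum_apply, Matrix.smul_apply,
    smul_eq_mul, choi]

lemma blockAmp {n m k : ℕ}
    (Ψ Φ₁ Φ₂ : Matrix (Fin n) (Fin n) ℂ →ₗ[ℂ] Matrix (Fin m) (Fin m) ℂ)
    (hblock : (Matrix.fromBlocks (choi Φ₁) (choi Ψ) (choi Ψ).conjTranspose
      (choi Φ₂)).PosSemidef)
    {A B X : Matrix (Fin k × Fin n) (Fin k × Fin n) ℂ}
    (hN : (Matrix.fromBlocks A X Xᴴ B).PosSemidef) :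
    (Matrix.fromBlocks (amp (Φ₁ ·) k A) (amp (Ψ ·) k X) (amp (Ψ ·) k X)ᴴ
      (amp (Φ₂ ·) k B)).PosSemidef := by
  have h := bigPos hN hblock
    (Sum.elim (fun (pi : Fin k × Fin m) (a : Fin n) => Sum.inl (pi.1, a))
      (fun (pi : Fin k × Fin m) (a : Fin n) => Sum.inr (pi.1, a)))
    (Sum.elim (fun (pi : Fin k × Fin m) (a : Fin n) => Sum.inl (a, pi.2))
      (fun (pi : Fin k × Fin m) (a : Fin n) => Sum.inr (a, pi.2)))
  convert h using 1
  ext p q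
  rcases p with p | p <;> rcases q with q | q <;>
    simp only [Matrix.fromBlocks_apply₁₁, Matrix.fromBlocks_apply₁₂,
      Matrix.fromBlocks_apply₂₁, Matrix.fromBlocks_apply₂₂, Matrix.of_apply,
      Sum.elim_inl, Sum.elim_inr, amp_entry, Matrix.conjTranspose_apply]
  · rw [star_sum]
    rw [Finset.sum_comm]
    refine Finset.sum_congr rfl fun a _ => ?_
    rw [star_sum]
    refine Finset.sum_congr rfl fun b _ => ?_
    simp [star_mul']

lemma star_sum_elim {ι₁ ι₂ : Type*} (u : ι₁ → ℂ) (v : ι₂ → ℂ) :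
    star (Sum.elim u v) = Sum.elim (star u) (star v) := by
  funext i; cases i <;> rfl

lemma block_form {ι₁ ι₂ : Type*} [Fintype ι₁] [Fintype ι₂]
    (P : Matrix ι₁ ι₁ ℂ) (X : Matrix ι₁ ι₂ ℂ) (Y : Matrix ι₂ ι₁ ℂ) (Q : Matrix ι₂ ι₂ ℂ)
    (u : ι₁ → ℂ) (v : ι₂ → ℂ) :
    star (Sum.elim u v) ⬝ᵥ (Matrix.fromBlocks P X Y Q *ᵥ Sum.elim u v) =
      star u ⬝ᵥ (P *ᵥ u) + star u ⬝ᵥ (X *ᵥ v) + star v ⬝ᵥ (Y *ᵥ u) +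
        star v ⬝ᵥ (Q *ᵥ v) := by
  rw [star_sum_elim, Matrix.fromBlocks_mulVec, sumElim_dotProduct_sumElim,
    dotProduct_add, dotProduct_add]
  simp only [Sum.elim_comp_inl, Sum.elim_comp_inr]
  ring

lemma dot_conjTranspose {ι₁ ι₂ : Type*} [Fintype ι₁] [Fintype ι₂]
    (M : Matrix ι₁ ι₂ ℂ) (u : ι₁ → ℂ) (v : ι₂ → ℂ) :
    star v ⬝ᵥ (Mᴴ *ᵥ u) = star (star u ⬝ᵥ (M *ᵥ v)) := by
  simp only [dotProduct, Matrix.mulVec, Matrix.conjTranspose_apply,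
    Pi.star_apply, star_sum, star_mul', star_star, Finset.mul_sum, Finset.sum_mul]
  rw [Finset.sum_comm]
  refine Finset.sum_congr rfl fun i _ => Finset.sum_congr rfl fun j _ => ?_
  ring

lemma dot_eq_inner {ι : Type*} [Fintype ι] (u v : ι → ℂ) :
    star u ⬝ᵥ v = ⟪(WithLp.equiv 2 (ι → ℂ)).symm u, (WithLp.equiv 2 (ι → ℂ)).symm v⟫_ℂ :=
  by rw [dotProduct_comm]; rfl

lemma mulVec_norm_le {ι₁ ι₂ : Type*} [Fintype ι₁] [Fintype ι₂] [DecidableEq ι₂]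
    (M : Matrix ι₁ ι₂ ℂ) (v : ι₂ → ℂ) :
    ‖(WithLp.equiv 2 (ι₁ → ℂ)).symm (M *ᵥ v)‖ ≤ ‖M‖ * ‖(WithLp.equiv 2 (ι₂ → ℂ)).symm v‖ := by
  exact M.l2_opNorm_mulVec ((WithLp.equiv 2 (ι₂ → ℂ)).symm v)

lemma dot_self_eq_normsq {ι : Type*} [Fintype ι] (u : ι → ℂ) :
    star u ⬝ᵥ u = ((‖(WithLp.equiv 2 (ι → ℂ)).symm u‖ ^ 2 : ℝ) : ℂ) := by
  rw [dot_eq_inner, inner_self_eq_norm_sq_to_K]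
  norm_cast

lemma normBlock {ι : Type*} [Fintype ι] [DecidableEq ι] (M : Matrix ι ι ℂ) :
    (Matrix.fromBlocks ((‖M‖ : ℂ) • 1) M Mᴴ ((‖M‖ : ℂ) • 1)).PosSemidef := by
  have hsm : ((‖M‖ : ℂ) • (1 : Matrix ι ι ℂ))ᴴ = (‖M‖ : ℂ) • 1 := by
    simp [Matrix.conjTranspose_smul, Complex.conj_ofReal]
  refine Matrix.PosSemidef.of_dotProduct_mulVec_nonneg ?_ ?_
  · rw [Matrix.IsHermitian, Matrix.fromBlocks_conjTranspose, hsm,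
      Matrix.conjTranspose_conjTranspose]
  · intro x
    have hx : x = Sum.elim (x ∘ Sum.inl) (x ∘ Sum.inr) := by funext i; cases i <;> rfl
    rw [hx, block_form]
    set u := x ∘ Sum.inl
    set v := x ∘ Sum.inr
    have h1 : star u ⬝ᵥ (((‖M‖ : ℂ) • (1 : Matrix ι ι ℂ)) *ᵥ u) =
        ((‖M‖ * ‖(WithLp.equiv 2 (ι → ℂ)).symm u‖ ^ 2 : ℝ) : ℂ) := by
      rw [Matrix.smul_mulVec, Matrix.one_mulVec, dotProduct_smul,
        dot_self_eq_normsq, smul_eq_mul]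
      push_cast
      ring
    have h2 : star v ⬝ᵥ (((‖M‖ : ℂ) • (1 : Matrix ι ι ℂ)) *ᵥ v) =
        ((‖M‖ * ‖(WithLp.equiv 2 (ι → ℂ)).symm v‖ ^ 2 : ℝ) : ℂ) := by
      rw [Matrix.smul_mulVec, Matrix.one_mulVec, dotProduct_smul,
        dot_self_eq_normsq, smul_eq_mul]
      push_cast
      ring
    set α := star u ⬝ᵥ (M *ᵥ v) with hα
    have h3 : star v ⬝ᵥ (Mᴴ *ᵥ u) = star α := dot_conjTranspose M u v
    have hαle : ‖α‖ ≤ ‖M‖ * ‖(WithLp.equiv 2 (ι → ℂ)).symm u‖ *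
        ‖(WithLp.equiv 2 (ι → ℂ)).symm v‖ := by
      rw [hα, dot_eq_inner]
      calc ‖(⟪(WithLp.equiv 2 (ι → ℂ)).symm u, (WithLp.equiv 2 (ι → ℂ)).symm (M *ᵥ v)⟫_ℂ)‖
          ≤ ‖(WithLp.equiv 2 (ι → ℂ)).symm u‖ * ‖(WithLp.equiv 2 (ι → ℂ)).symm (M *ᵥ v)‖ :=
            norm_inner_le_norm _ _
        _ ≤ ‖(WithLp.equiv 2 (ι → ℂ)).symm u‖ * (‖M‖ * ‖(WithLp.equiv 2 (ι → ℂ)).symm v‖) :=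
            mul_le_mul_of_nonneg_left (mulVec_norm_le M v) (norm_nonneg _)
        _ = _ := by ring
    rw [h1, h2, h3]
    have hsum : α + star α = ((2 * α.re : ℝ) : ℂ) := by
      simpa using Complex.add_conj α
    have hform : ((‖M‖ * ‖(WithLp.equiv 2 (ι → ℂ)).symm u‖ ^ 2 : ℝ) : ℂ) + α + star α +
        ((‖M‖ * ‖(WithLp.equiv 2 (ι → ℂ)).symm v‖ ^ 2 : ℝ) : ℂ) =
        ((‖M‖ * ‖(WithLp.equiv 2 (ι → ℂ)).symm u‖ ^ 2 + 2 * α.re +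
          ‖M‖ * ‖(WithLp.equiv 2 (ι → ℂ)).symm v‖ ^ 2 : ℝ) : ℂ) := by
      push_cast at hsum ⊢
      linear_combination hsum
    rw [hform, Complex.zero_le_real]
    have h' : |α.re| ≤ ‖α‖ := Complex.abs_re_le_norm α
    have hre := abs_le.mp (h'.trans hαle)
    nlinarith [sq_nonneg (‖(WithLp.equiv 2 (ι → ℂ)).symm u‖ - ‖(WithLp.equiv 2 (ι → ℂ)).symm v‖),
      norm_nonneg M, hre.1]

lemma psd_dot_real {ι : Type*} [Fintype ι] {P : Matrix ι ι ℂ} (hP : P.PosSemidef)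
    (u : ι → ℂ) : star u ⬝ᵥ (P *ᵥ u) = (((star u ⬝ᵥ (P *ᵥ u)).re : ℝ) : ℂ) ∧
      0 ≤ (star u ⬝ᵥ (P *ᵥ u)).re := by
  have h := hP.dotProduct_mulVec_nonneg u
  rw [Complex.le_def] at h
  obtain ⟨h1, h2⟩ := h
  refine ⟨?_, by simpa using h1⟩
  apply Complex.ext <;> simp [← h2]

lemma psd_block₁ {ι₁ ι₂ : Type*} [Fintype ι₁] [Fintype ι₂]
    {P : Matrix ι₁ ι₁ ℂ} {X : Matrix ι₁ ι₂ ℂ} {Y : Matrix ι₂ ι₁ ℂ} {Q : Matrix ι₂ ι₂ ℂ}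
    (h : (Matrix.fromBlocks P X Y Q).PosSemidef) : P.PosSemidef := by
  have := h.submatrix (Sum.inl : ι₁ → ι₁ ⊕ ι₂)
  convert this using 1
  rfl

lemma psd_block₂ {ι₁ ι₂ : Type*} [Fintype ι₁] [Fintype ι₂]
    {P : Matrix ι₁ ι₁ ℂ} {X : Matrix ι₁ ι₂ ℂ} {Y : Matrix ι₂ ι₁ ℂ} {Q : Matrix ι₂ ι₂ ℂ}
    (h : (Matrix.fromBlocks P X Y Q).PosSemidef) : Q.PosSemidef := by
  have := h.submatrix (Sum.inr : ι₂ → ι₁ ⊕ ι₂)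
  convert this using 1
  rfl

-- the off-diagonal bound

lemma offdiag_bound {ι₁ ι₂ : Type*} [Fintype ι₁] [Fintype ι₂]
    {P : Matrix ι₁ ι₁ ℂ} {X : Matrix ι₁ ι₂ ℂ} {Q : Matrix ι₂ ι₂ ℂ}
    (h : (Matrix.fromBlocks P X Xᴴ Q).PosSemidef) (u : ι₁ → ℂ) (v : ι₂ → ℂ) :
    ‖star u ⬝ᵥ (X *ᵥ v)‖ ^ 2 ≤
      (star u ⬝ᵥ (P *ᵥ u)).re * (star v ⬝ᵥ (Q *ᵥ v)).re := by
  obtain ⟨hPr, hPnn⟩ := psd_dot_real (psd_block₁ h) u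
  obtain ⟨hQr, hQnn⟩ := psd_dot_real (psd_block₂ h) v
  set α := star u ⬝ᵥ (X *ᵥ v) with hαdef
  set p := (star u ⬝ᵥ (P *ᵥ u)).re
  set q := (star v ⬝ᵥ (Q *ᵥ v)).re
  by_cases hα : α = 0
  · rw [hα]
    simpa using mul_nonneg hPnn hQnn
  · have hαn : (0:ℝ) < ‖α‖ := norm_pos_iff.mpr hα
    set c : ℂ := -(star α) / (‖α‖ : ℂ) with hc
    have hns : star α * α = ((‖α‖ ^ 2 : ℝ) : ℂ) := by
      rw [show star α = (starRingEnd ℂ) α from rfl, mul_comm, Complex.mul_conj,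
        Complex.normSq_eq_norm_sq]
    have hαC : ((‖α‖ : ℝ) : ℂ) ≠ 0 := Complex.ofReal_ne_zero.mpr hαn.ne'
    have hcα : c * α = -(‖α‖ : ℂ) := by
      have h1 : c * α = -(star α * α) / (‖α‖ : ℂ) := by rw [hc]; ring
      rw [h1, hns, show ((‖α‖ ^ 2 : ℝ) : ℂ) = (‖α‖ : ℂ) * (‖α‖ : ℂ) by
        rw [pow_two, Complex.ofReal_mul], neg_div, mul_div_assoc, div_self hαC, mul_one]
    have hnc : ‖c‖ = 1 := by
      rw [hc, norm_div, norm_neg, norm_star, Complex.norm_real, Real.norm_eq_abs,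
        abs_of_nonneg (norm_nonneg α)]
      exact div_self hαn.ne'
    have hcc : star c * c = 1 := by
      rw [show star c = (starRingEnd ℂ) c from rfl, mul_comm, Complex.mul_conj,
        Complex.normSq_eq_norm_sq, hnc]
      norm_num
    have key : ∀ t : ℝ, 0 ≤ t ^ 2 * p - 2 * t * ‖α‖ + q := by
      intro t
      have h0 := h.dotProduct_mulVec_nonneg (Sum.elim ((t : ℂ) • u) (c • v))
      rw [block_form] at h0
      have e1 : star ((t : ℂ) • u) ⬝ᵥ (P *ᵥ ((t : ℂ) • u)) = ((t ^ 2 * p : ℝ) : ℂ) := by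
        rw [star_smul, smul_dotProduct, Matrix.mulVec_smul, dotProduct_smul, hPr]
        simp only [smul_eq_mul, Complex.star_def, Complex.conj_ofReal]
        push_cast
        ring
      have e2 : star ((t : ℂ) • u) ⬝ᵥ (X *ᵥ (c • v)) = ((-(t * ‖α‖) : ℝ) : ℂ) := by
        rw [star_smul, smul_dotProduct, Matrix.mulVec_smul, dotProduct_smul,
          ← hαdef]
        simp only [smul_eq_mul, Complex.star_def, Complex.conj_ofReal]
        rw [hcα]
        push_cast
        ring
      have e3 : star (c • v) ⬝ᵥ (Xᴴ *ᵥ ((t : ℂ) • u)) = ((-(t * ‖α‖) : ℝ) : ℂ) := by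
        rw [star_smul, smul_dotProduct, Matrix.mulVec_smul, dotProduct_smul,
          dot_conjTranspose, ← hαdef]
        simp only [smul_eq_mul, Complex.star_def, Complex.conj_ofReal]
        rw [show (starRingEnd ℂ) c * ((t : ℂ) * (starRingEnd ℂ) α) =
          (t : ℂ) * (starRingEnd ℂ) (c * α) by rw [_root_.map_mul]; ring, hcα]
        simp only [map_neg, Complex.conj_ofReal]
        push_cast
        ring
      have e4 : star (c • v) ⬝ᵥ (Q *ᵥ (c • v)) = ((q : ℝ) : ℂ) := by
        rw [star_smul, smul_dotProduct, Matrix.mulVec_smul, dotProduct_smul, hQr]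
        rw [smul_eq_mul, smul_eq_mul, ← mul_assoc, hcc, one_mul]
      rw [e1, e2, e3, e4] at h0
      have : ((t ^ 2 * p : ℝ) : ℂ) + ((-(t * ‖α‖) : ℝ) : ℂ) + ((-(t * ‖α‖) : ℝ) : ℂ) +
          ((q : ℝ) : ℂ) = ((t ^ 2 * p - 2 * t * ‖α‖ + q : ℝ) : ℂ) := by
        push_cast
        ring
      rw [this, Complex.zero_le_real] at h0
      exact h0
    have hp_pos : 0 < p ∨ p = 0 := hPnn.lt_or_eq.imp id Eq.symm
    rcases hp_pos with hp | hp
    · have h1 := key (‖α‖ / p)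
      have h2 : ‖α‖ / p * p = ‖α‖ := div_mul_cancel₀ _ hp.ne'
      nlinarith [h1, h2, hp]
    · exfalso
      have h1 := key ((q + 1) / (2 * ‖α‖))
      rw [hp] at h1
      have h2 : (q + 1) / (2 * ‖α‖) * (2 * ‖α‖) = q + 1 :=
        div_mul_cancel₀ _ (by positivity)
      nlinarith [h1, h2, hαn, hQnn]

lemma re_dot_le {ι : Type*} [Fintype ι] [DecidableEq ι] (Q : Matrix ι ι ℂ) (u : ι → ℂ) :
    (star u ⬝ᵥ (Q *ᵥ u)).re ≤ ‖Q‖ * ‖(WithLp.equiv 2 (ι → ℂ)).symm u‖ ^ 2 := by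
  have h1 : (star u ⬝ᵥ (Q *ᵥ u)).re ≤ ‖star u ⬝ᵥ (Q *ᵥ u)‖ := Complex.re_le_norm _
  refine h1.trans ?_
  rw [dot_eq_inner]
  calc ‖(⟪(WithLp.equiv 2 (ι → ℂ)).symm u, (WithLp.equiv 2 (ι → ℂ)).symm (Q *ᵥ u)⟫_ℂ)‖
      ≤ ‖(WithLp.equiv 2 (ι → ℂ)).symm u‖ * ‖(WithLp.equiv 2 (ι → ℂ)).symm (Q *ᵥ u)‖ :=
        norm_inner_le_norm _ _
    _ ≤ ‖(WithLp.equiv 2 (ι → ℂ)).symm u‖ * (‖Q‖ * ‖(WithLp.equiv 2 (ι → ℂ)).symm u‖) :=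
        mul_le_mul_of_nonneg_left (mulVec_norm_le Q u) (norm_nonneg _)
    _ = ‖Q‖ * ‖(WithLp.equiv 2 (ι → ℂ)).symm u‖ ^ 2 := by ring

-- scalar multiple pulls out of amp

lemma amp_smul {n m k : ℕ} (φ : Matrix (Fin n) (Fin n) ℂ →ₗ[ℂ] Matrix (Fin m) (Fin m) ℂ)
    (s : ℂ) (M : Matrix (Fin k × Fin n) (Fin k × Fin n) ℂ) :
    amp (φ ·) k (s • M) = s • amp (φ ·) k M := by
  funext p q
  show φ (fun a b => (s • M) (p.1, a) (q.1, b)) p.2 q.2 = _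
  have : (fun a b => (s • M) (p.1, a) (q.1, b)) = s • fun a b => M (p.1, a) (q.1, b) := rfl
  rw [this]
  exact congrFun (congrFun (φ.map_smul s (fun a b => M (p.1, a) (q.1, b))) p.2) q.2

-- entries of `amp φ 1`

lemma amp_one_entry {n m k : ℕ} (φ : Matrix (Fin n) (Fin n) ℂ →ₗ[ℂ] Matrix (Fin m) (Fin m) ℂ)
    (p q : Fin k × Fin m) :
    amp (φ ·) k 1 p q = if p.1 = q.1 then φ 1 p.2 q.2 else 0 := by
  show φ (fun a b => (1 : Matrix (Fin k × Fin n) (Fin k × Fin n) ℂ) (p.1, a) (q.1, b))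
      p.2 q.2 = _
  have : (fun a b => (1 : Matrix (Fin k × Fin n) (Fin k × Fin n) ℂ) (p.1, a) (q.1, b)) =
      if p.1 = q.1 then (1 : Matrix (Fin n) (Fin n) ℂ) else 0 := by
    by_cases hpq : p.1 = q.1
    · rw [if_pos hpq]
      funext a b
      simp [Matrix.one_apply, Prod.ext_iff, hpq]
    · rw [if_neg hpq]
      funext a b
      simp [Matrix.one_apply, Prod.ext_iff, hpq]
  rw [this]
  by_cases hpq : p.1 = q.1
  · rw [if_pos hpq, if_pos hpq]
  · rw [if_neg hpq, if_neg hpq, map_zero]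
    rfl

-- Euclidean norm squared over a product index splits into blocks

lemma normsq_prod {κ ι : Type*} [Fintype κ] [Fintype ι] (y : κ × ι → ℂ) :
    ‖(WithLp.equiv 2 (κ × ι → ℂ)).symm y‖ ^ 2 =
      ∑ p : κ, ‖(WithLp.equiv 2 (ι → ℂ)).symm (fun i => y (p, i))‖ ^ 2 := by
  rw [EuclideanSpace.norm_eq, Real.sq_sqrt (by positivity)]
  rw [Fintype.sum_prod_type]
  refine Finset.sum_congr rfl fun p _ => ?_
  rw [EuclideanSpace.norm_eq, Real.sq_sqrt (by positivity)]
  rfl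

-- the quadratic form of `amp φ 1` splits blockwise

lemma amp_one_form {n m k : ℕ} (φ : Matrix (Fin n) (Fin n) ℂ →ₗ[ℂ] Matrix (Fin m) (Fin m) ℂ)
    (y : Fin k × Fin m → ℂ) :
    star y ⬝ᵥ (amp (φ ·) k 1 *ᵥ y) =
      ∑ p : Fin k, star (fun i => y (p, i)) ⬝ᵥ (φ 1 *ᵥ fun i => y (p, i)) := by
  simp only [dotProduct, Matrix.mulVec, Pi.star_apply, Fintype.sum_prod_type,
    amp_one_entry]
  refine Finset.sum_congr rfl fun p _ => Finset.sum_congr rfl fun i _ => ?_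
  congr 1
  calc ∑ q : Fin k, ∑ x : Fin m, (if p = q then φ 1 i x else 0) * y (q, x)
      = ∑ q : Fin k, (if p = q then ∑ x : Fin m, φ 1 i x * y (q, x) else 0) :=
        Finset.sum_congr rfl fun q _ => by split <;> simp
    _ = ∑ x : Fin m, φ 1 i x * y (p, x) := by
        rw [Finset.sum_ite_eq]
        simp

-- ‖1‖ ≤ 1 for the L2 operator norm

lemma norm_one_le (n : ℕ) : ‖(1 : Matrix (Fin n) (Fin n) ℂ)‖ ≤ 1 := by
  rw [Matrix.cstar_norm_def, _root_.map_one]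
  exact ContinuousLinearMap.norm_id_le

-- Lemma F: quadratic form bound for `amp φ (s • 1)`

lemma amp_smul_one_form_le {n m k : ℕ}
    (φ : Matrix (Fin n) (Fin n) ℂ →ₗ[ℂ] Matrix (Fin m) (Fin m) ℂ)
    {C : ℝ} (hC : 0 ≤ C) (hφ : ∀ x, ‖φ x‖ ≤ C * ‖x‖) (s : ℝ) (hs : 0 ≤ s)
    (y : Fin k × Fin m → ℂ) :
    (star y ⬝ᵥ (amp (φ ·) k ((s : ℂ) • 1) *ᵥ y)).re ≤
      s * C * ‖(WithLp.equiv 2 (Fin k × Fin m → ℂ)).symm y‖ ^ 2 := by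
  rw [amp_smul, Matrix.smul_mulVec, dotProduct_smul]
  rw [amp_one_form]
  have hre : ((s : ℂ) • ∑ p : Fin k, star (fun i => y (p, i)) ⬝ᵥ (φ 1 *ᵥ fun i => y (p, i))).re
      = s * ∑ p : Fin k, (star (fun i => y (p, i)) ⬝ᵥ (φ 1 *ᵥ fun i => y (p, i))).re := by
    rw [smul_eq_mul, Complex.re_ofReal_mul, Complex.re_sum]
  rw [hre, normsq_prod, Finset.mul_sum, Finset.mul_sum]
  refine Finset.sum_le_sum fun p _ => ?_
  have h1 := re_dot_le (φ 1) (fun i => y (p, i))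
  have h2 : ‖φ 1‖ ≤ C := by
    have h3 := hφ 1
    have h4 := norm_one_le n
    nlinarith
  have h5 : (0:ℝ) ≤ ‖(WithLp.equiv 2 (Fin m → ℂ)).symm fun i => y (p, i)‖ ^ 2 := by positivity
  nlinarith [norm_nonneg (φ 1), mul_le_mul_of_nonneg_left
    (h1.trans (mul_le_mul_of_nonneg_right h2 h5)) hs]

-- Lemma H: operator norm bound from sesquilinear bounds

lemma opnorm_le_of_dot {ι₁ ι₂ : Type*} [Fintype ι₁] [Fintype ι₂] [DecidableEq ι₁]
    [DecidableEq ι₂] (A : Matrix ι₁ ι₂ ℂ) (B : ℝ) (hB : 0 ≤ B)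
    (h : ∀ (x : ι₂ → ℂ) (y : ι₁ → ℂ), ‖star y ⬝ᵥ (A *ᵥ x)‖ ≤
      B * (‖(WithLp.equiv 2 (ι₂ → ℂ)).symm x‖ * ‖(WithLp.equiv 2 (ι₁ → ℂ)).symm y‖)) :
    ‖A‖ ≤ B := by
  rw [Matrix.l2_opNorm_def]
  refine ContinuousLinearMap.opNorm_le_bound _ hB fun x => ?_
  set xf : ι₂ → ℂ := WithLp.equiv 2 (ι₂ → ℂ) x with hxf
  have hx : x = (WithLp.equiv 2 (ι₂ → ℂ)).symm xf := rfl
  set yf : ι₁ → ℂ := A *ᵥ xf with hyf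
  have happ : (LinearEquiv.trans Matrix.toEuclideanLin
      LinearMap.toContinuousLinearMap A) x = (WithLp.equiv 2 (ι₁ → ℂ)).symm yf := by
    show Matrix.toEuclideanLin A x = _
    rw [Matrix.toEuclideanLin_apply]
    rfl
  rw [happ, show ‖x‖ = ‖(WithLp.equiv 2 (ι₂ → ℂ)).symm xf‖ from rfl]
  have hsq : ‖(WithLp.equiv 2 (ι₁ → ℂ)).symm yf‖ ^ 2 = ‖star yf ⬝ᵥ (A *ᵥ xf)‖ := by
    rw [← hyf, dot_self_eq_normsq]
    rw [Complex.norm_real, Real.norm_eq_abs, abs_of_nonneg (by positivity)]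
  have hb := h xf yf
  by_cases h0 : ‖(WithLp.equiv 2 (ι₁ → ℂ)).symm yf‖ = 0
  · rw [h0]
    positivity
  · have h0' : 0 < ‖(WithLp.equiv 2 (ι₁ → ℂ)).symm yf‖ := lt_of_le_of_ne (norm_nonneg _)
      (Ne.symm h0)
    nlinarith [hsq, hb, h0', norm_nonneg ((WithLp.equiv 2 (ι₂ → ℂ)).symm xf)]

/-- if `Ψ : Mₙ(ℂ) → M_m(ℂ)` admits completely positive maps `Φ₁, Φ₂` such that
`[[Choi(Φ₁), Choi(Ψ)], [Choi(Ψ)*, Choi(Φ₂)]] ≥ 0`, then `‖Ψ‖_cb ≤ √(‖Φ₁‖ ⬝ ‖Φ₂‖)`: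
for all norm bounds `C₁, C₂` of `Φ₁, Φ₂`, every amplification of `Ψ` is bounded by
`√(C₁ C₂)`. -/
theorem stmt7 (n m : ℕ)
    (Ψ Φ₁ Φ₂ : Matrix (Fin n) (Fin n) ℂ →ₗ[ℂ] Matrix (Fin m) (Fin m) ℂ)
    (hcp₁ : IsCompletelyPositive (Φ₁ ·)) (hcp₂ : IsCompletelyPositive (Φ₂ ·))
    (hblock : (Matrix.fromBlocks (choi Φ₁) (choi Ψ) (choi Ψ).conjTranspose
      (choi Φ₂)).PosSemidef)
    (C₁ C₂ : ℝ) (hC₁ : 0 ≤ C₁) (hC₂ : 0 ≤ C₂)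
    (hΦ₁ : ∀ x, ‖Φ₁ x‖ ≤ C₁ * ‖x‖) (hΦ₂ : ∀ x, ‖Φ₂ x‖ ≤ C₂ * ‖x‖) :
    ∀ (k : ℕ) (M : Matrix (Fin k × Fin n) (Fin k × Fin n) ℂ),
      ‖amp (Ψ ·) k M‖ ≤ Real.sqrt (C₁ * C₂) * ‖M‖ := by
  intro k M
  apply opnorm_le_of_dot _ _ (by positivity)
  intro x y
  have hBig := blockAmp Ψ Φ₁ Φ₂ hblock (normBlock M)
  have hod := offdiag_bound hBig y x
  have h1 := amp_smul_one_form_le Φ₁ hC₁ hΦ₁ ‖M‖ (norm_nonneg M) y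
  have h2 := amp_smul_one_form_le Φ₂ hC₂ hΦ₂ ‖M‖ (norm_nonneg M) x
  have hq0 : 0 ≤ (star x ⬝ᵥ (amp (Φ₂ ·) k ((‖M‖ : ℂ) • 1) *ᵥ x)).re :=
    (psd_dot_real (psd_block₂ hBig) x).2
  have h3 : ‖star y ⬝ᵥ (amp (Ψ ·) k M *ᵥ x)‖ ^ 2 ≤
      (‖M‖ * C₁ * ‖(WithLp.equiv 2 (Fin k × Fin m → ℂ)).symm y‖ ^ 2) *
      (‖M‖ * C₂ * ‖(WithLp.equiv 2 (Fin k × Fin m → ℂ)).symm x‖ ^ 2) :=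
    hod.trans (mul_le_mul h1 h2 hq0 (by positivity))
  have h4 : (‖M‖ * C₁ * ‖(WithLp.equiv 2 (Fin k × Fin m → ℂ)).symm y‖ ^ 2) *
      (‖M‖ * C₂ * ‖(WithLp.equiv 2 (Fin k × Fin m → ℂ)).symm x‖ ^ 2) =
      (Real.sqrt (C₁ * C₂) * ‖M‖ * (‖(WithLp.equiv 2 (Fin k × Fin m → ℂ)).symm x‖ *
        ‖(WithLp.equiv 2 (Fin k × Fin m → ℂ)).symm y‖)) ^ 2 := by
    rw [mul_pow, mul_pow, Real.sq_sqrt (mul_nonneg hC₁ hC₂)]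
    ring
  have h5 := Real.sqrt_le_sqrt (h3.trans_eq h4)
  rw [Real.sqrt_sq (norm_nonneg _), Real.sqrt_sq (by positivity)] at h5
  calc ‖star y ⬝ᵥ (amp (Ψ ·) k M *ᵥ x)‖ ≤ _ := h5
    _ = Real.sqrt (C₁ * C₂) * ‖M‖ * (‖(WithLp.equiv 2 (Fin k × Fin m → ℂ)).symm x‖ *
        ‖(WithLp.equiv 2 (Fin k × Fin m → ℂ)).symm y‖) := rfl
end

section
/- Suppose that for some r > 0 every self-adjoint x ∈ M_n ⊗ M_{2k} with ‖x‖ ≤ r satisfies that 1 ⊗ 1 − x is separable (for all k). Then every positive contractive linear map φ : M_n(ℂ) → M_m(ℂ) satisfies ‖Id_{M_k} ⊗ φ‖ ≤ 1/r for all k, i.e. ‖φ‖_cb ≤ 1/r. -/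
open Matrix ComplexOrder Kronecker
open scoped Matrix.Norms.L2Operator

/-- The separable elements of `Mₙ(ℂ) ⊗ M_m(ℂ)`. -/
def Separable (n m : ℕ) : Set (Matrix (Fin n × Fin m) (Fin n × Fin m) ℂ) :=
  closure {X | ∃ (N : ℕ) (P : Fin N → Matrix (Fin n) (Fin n) ℂ)
    (Q : Fin N → Matrix (Fin m) (Fin m) ℂ),
    (∀ t, (P t).PosSemidef) ∧ (∀ t, (Q t).PosSemidef) ∧ X = ∑ t, P t ⊗ₖ Q t}

set_option linter.unusedSectionVars false
set_option maxHeartbeats 1000000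

namespace Stmt10Aux

variable {ι κ : Type*} [Fintype ι] [Fintype κ] [DecidableEq ι] [DecidableEq κ]

/-- Operator norm bound from a bound on the squared `ℓ²`-norms of images. -/
lemma l2norm_le_of_sq {A : Matrix ι κ ℂ} {c : ℝ} (hc : 0 ≤ c)
    (h : ∀ v : κ → ℂ, ∑ i, ‖(A *ᵥ v) i‖ ^ 2 ≤ c ^ 2 * ∑ j, ‖v j‖ ^ 2) : ‖A‖ ≤ c := by
  rw [Matrix.l2_opNorm_def]
  refine ContinuousLinearMap.opNorm_le_bound _ hc fun x => ?_
  have happ : (LinearEquiv.trans Matrix.toEuclideanLin LinearMap.toContinuousLinearMap A) x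
      = ((WithLp.equiv 2 (ι → ℂ)).symm (A *ᵥ (WithLp.equiv 2 (κ → ℂ) x))
        : EuclideanSpace ℂ ι) := rfl
  have hxn : ‖x‖ = Real.sqrt (∑ j, ‖(WithLp.equiv 2 (κ → ℂ) x) j‖ ^ 2) := by
    rw [EuclideanSpace.norm_eq]; rfl
  have happn : ‖(LinearEquiv.trans Matrix.toEuclideanLin LinearMap.toContinuousLinearMap A) x‖
      = Real.sqrt (∑ i, ‖(A *ᵥ (WithLp.equiv 2 (κ → ℂ) x)) i‖ ^ 2) := by
    rw [happ, EuclideanSpace.norm_eq]; rfl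
  rw [happn, hxn]
  calc Real.sqrt (∑ i, ‖(A *ᵥ (WithLp.equiv 2 (κ → ℂ)) x) i‖ ^ 2)
      ≤ Real.sqrt (c ^ 2 * ∑ j, ‖(WithLp.equiv 2 (κ → ℂ)) x j‖ ^ 2) :=
        Real.sqrt_le_sqrt (h _)
    _ = c * Real.sqrt (∑ j, ‖(WithLp.equiv 2 (κ → ℂ)) x j‖ ^ 2) := by
        rw [Real.sqrt_mul (sq_nonneg c), Real.sqrt_sq hc]

noncomputable def euc (v : ι → ℂ) : EuclideanSpace ℂ ι := (WithLp.equiv 2 (ι → ℂ)).symm v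

lemma euc_norm (v : ι → ℂ) : ‖euc v‖ = Real.sqrt (∑ i, ‖v i‖ ^ 2) := by
  rw [EuclideanSpace.norm_eq]; rfl

lemma sq_sum_mulVec_le (A : Matrix ι κ ℂ) (v : κ → ℂ) :
    ∑ i, ‖(A *ᵥ v) i‖ ^ 2 ≤ ‖A‖ ^ 2 * ∑ j, ‖v j‖ ^ 2 := by
  have h := A.l2_opNorm_mulVec (euc v)
  have h1 : ‖(EuclideanSpace.equiv ι ℂ).symm (A *ᵥ (euc v))‖
      = Real.sqrt (∑ i, ‖(A *ᵥ v) i‖ ^ 2) := by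
    rw [← euc_norm]; rfl
  rw [h1, euc_norm] at h
  have h2 : (0:ℝ) ≤ ∑ i, ‖(A *ᵥ v) i‖ ^ 2 := Finset.sum_nonneg fun _ _ => sq_nonneg _
  have h3 : (0:ℝ) ≤ ∑ j, ‖v j‖ ^ 2 := Finset.sum_nonneg fun _ _ => sq_nonneg _
  have := mul_self_le_mul_self (Real.sqrt_nonneg _) h
  rw [Real.mul_self_sqrt h2] at this
  calc ∑ i, ‖(A *ᵥ v) i‖ ^ 2 ≤ (‖A‖ * Real.sqrt (∑ j, ‖v j‖ ^ 2)) *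
        (‖A‖ * Real.sqrt (∑ j, ‖v j‖ ^ 2)) := this
    _ = ‖A‖ ^ 2 * ∑ j, ‖v j‖ ^ 2 := by
        rw [mul_mul_mul_comm, Real.mul_self_sqrt h3]; ring

lemma norm_dot_le (A : Matrix ι ι ℂ) (v : ι → ℂ) :
    ‖star v ⬝ᵥ (A *ᵥ v)‖ ≤ ‖A‖ * ∑ i, ‖v i‖ ^ 2 := by
  have hip : star v ⬝ᵥ (A *ᵥ v) = inner ℂ (euc v) (euc (A *ᵥ v)) := by
    rw [EuclideanSpace.inner_eq_star_dotProduct, dotProduct_comm]; rfl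
  rw [hip]
  calc ‖(inner ℂ (euc v) (euc (A *ᵥ v)) : ℂ)‖ ≤ ‖euc v‖ * ‖euc (A *ᵥ v)‖ :=
        norm_inner_le_norm _ _
    _ ≤ ‖euc v‖ * (‖A‖ * ‖euc v‖) := by
        refine mul_le_mul_of_nonneg_left ?_ (norm_nonneg _)
        have := A.l2_opNorm_mulVec (euc v)
        have h1 : (EuclideanSpace.equiv ι ℂ).symm (A *ᵥ (euc v)) = euc (A *ᵥ v) := rfl
        rwa [h1] at this
    _ = ‖A‖ * (‖euc v‖ * ‖euc v‖) := by ring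
    _ = ‖A‖ * ∑ i, ‖v i‖ ^ 2 := by
        rw [euc_norm, Real.mul_self_sqrt (Finset.sum_nonneg fun _ _ => sq_nonneg _)]

lemma norm_one_le : ‖(1 : Matrix ι ι ℂ)‖ ≤ 1 := by
  refine l2norm_le_of_sq zero_le_one fun v => ?_
  rw [Matrix.one_mulVec, one_pow, one_mul]

lemma dot_self_eq (v : ι → ℂ) : star v ⬝ᵥ v = ((∑ i, ‖v i‖ ^ 2 : ℝ) : ℂ) := by
  rw [dotProduct, Complex.ofReal_sum]
  refine Finset.sum_congr rfl fun i _ => ?_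
  rw [Pi.star_apply, Complex.star_def, ← Complex.normSq_eq_conj_mul_self]
  norm_cast
  rw [Complex.normSq_eq_norm_sq]

lemma psd_one_sub {S : Matrix ι ι ℂ} (hS : S.PosSemidef) (hn : ‖S‖ ≤ 1) :
    ((1 : Matrix ι ι ℂ) - S).PosSemidef := by
  refine Matrix.PosSemidef.of_dotProduct_mulVec_nonneg (Matrix.isHermitian_one.sub hS.1) fun v => ?_
  rw [Matrix.sub_mulVec, Matrix.one_mulVec, dotProduct_sub, dot_self_eq]
  have h0 := hS.dotProduct_mulVec_nonneg v
  have hre := (Complex.nonneg_iff.mp h0).1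
  have him := (Complex.nonneg_iff.mp h0).2
  have hb : (star v ⬝ᵥ (S *ᵥ v)).re ≤ ∑ i, ‖v i‖ ^ 2 := by
    calc (star v ⬝ᵥ (S *ᵥ v)).re ≤ ‖star v ⬝ᵥ (S *ᵥ v)‖ := Complex.re_le_norm _
      _ ≤ ‖S‖ * ∑ i, ‖v i‖ ^ 2 := norm_dot_le S v
      _ ≤ 1 * ∑ i, ‖v i‖ ^ 2 :=
          mul_le_mul_of_nonneg_right hn (Finset.sum_nonneg fun _ _ => sq_nonneg _)
      _ = ∑ i, ‖v i‖ ^ 2 := one_mul _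
  rw [Complex.nonneg_iff, Complex.sub_re, Complex.sub_im, Complex.ofReal_re,
    Complex.ofReal_im]
  exact ⟨by linarith, by rw [← him]; ring⟩

lemma posSemidef_sum {N : ℕ} (f : Fin N → Matrix ι ι ℂ) (h : ∀ t, (f t).PosSemidef) :
    (∑ t, f t).PosSemidef :=
  Finset.sum_induction f _ (fun _ _ ha hb => ha.add hb) Matrix.PosSemidef.zero
    (fun i _ => h i)

lemma posSemidef_kron {P : Matrix ι ι ℂ} {Q : Matrix κ κ ℂ} (hP : P.PosSemidef)
    (hQ : Q.PosSemidef) : (P ⊗ₖ Q).PosSemidef := by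
  exact hP.kronecker hQ

lemma isClosed_posSemidef : IsClosed {A : Matrix ι ι ℂ | A.PosSemidef} := by
  have h1 : IsClosed {A : Matrix ι ι ℂ | A.IsHermitian} := by
    have hct : Continuous fun A : Matrix ι ι ℂ => Aᴴ := by
      have : Isometry fun A : Matrix ι ι ℂ => Aᴴ := by
        refine Isometry.of_dist_eq fun A B => ?_
        rw [dist_eq_norm, dist_eq_norm, ← Matrix.conjTranspose_sub,
          Matrix.l2_opNorm_conjTranspose]
      exact this.continuous
    exact isClosed_eq hct continuous_id
  have h2 : ∀ v : ι → ℂ, IsClosed {A : Matrix ι ι ℂ | 0 ≤ star v ⬝ᵥ (A *ᵥ v)} := by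
    intro v
    have hcont : Continuous fun A : Matrix ι ι ℂ => star v ⬝ᵥ (A *ᵥ v) := by
      let L : Matrix ι ι ℂ →ₗ[ℂ] ℂ :=
        { toFun := fun A => star v ⬝ᵥ (A *ᵥ v)
          map_add' := fun A B => by simp [Matrix.add_mulVec, dotProduct_add]
          map_smul' := fun c A => by simp [Matrix.smul_mulVec, dotProduct_smul] }
      exact L.continuous_of_finiteDimensional
    have hset : {A : Matrix ι ι ℂ | 0 ≤ star v ⬝ᵥ (A *ᵥ v)} =
        (fun A : Matrix ι ι ℂ => star v ⬝ᵥ (A *ᵥ v)) ⁻¹'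
          (Complex.re ⁻¹' Set.Ici 0 ∩ Complex.im ⁻¹' {0}) := by
      ext A
      simp only [Set.mem_setOf_eq, Set.mem_preimage, Set.mem_inter_iff, Set.mem_Ici,
        Set.mem_singleton_iff, Complex.nonneg_iff]
      tauto
    rw [hset]
    exact ((isClosed_Ici.preimage Complex.continuous_re).inter
      (isClosed_singleton.preimage Complex.continuous_im)).preimage hcont
  have : {A : Matrix ι ι ℂ | A.PosSemidef} =
      {A : Matrix ι ι ℂ | A.IsHermitian} ∩ ⋂ v : ι → ℂ, {A | 0 ≤ star v ⬝ᵥ (A *ᵥ v)} := by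
    ext A
    simp only [Set.mem_setOf_eq, Set.mem_inter_iff, Set.mem_iInter]
    exact ⟨fun h => ⟨h.1, h.dotProduct_mulVec_nonneg⟩, fun h => Matrix.PosSemidef.of_dotProduct_mulVec_nonneg h.1 h.2⟩
  rw [this]
  exact h1.inter (isClosed_iInter h2)

lemma dot_self_one {T : Matrix ι ι ℂ} (hT : T.IsHermitian) (i : ι) :
    star ((WithLp.equiv 2 (ι → ℂ)) (hT.eigenvectorBasis i)) ⬝ᵥ
      ((WithLp.equiv 2 (ι → ℂ)) (hT.eigenvectorBasis i)) = 1 := by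
  have h := hT.eigenvectorBasis.orthonormal.1 i
  have := inner_self_eq_norm_sq_to_K (𝕜 := ℂ) (hT.eigenvectorBasis i)
  rw [EuclideanSpace.inner_eq_star_dotProduct, h] at this
  rw [dotProduct_comm]
  simpa using this

lemma eig_le_of_psd {T : Matrix ι ι ℂ} (hT : T.IsHermitian) {c : ℝ}
    (h : (((c : ℂ) • 1 - T)).PosSemidef) (i : ι) : hT.eigenvalues i ≤ c := by
  have hv := h.dotProduct_mulVec_nonneg ((WithLp.equiv 2 (ι → ℂ)) (hT.eigenvectorBasis i))
  rw [Matrix.sub_mulVec, Matrix.smul_mulVec, Matrix.one_mulVec,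
    (show T *ᵥ (WithLp.equiv 2 (ι → ℂ)) (hT.eigenvectorBasis i) = (hT.eigenvalues i •
      (WithLp.equiv 2 (ι → ℂ)) (hT.eigenvectorBasis i) : ι → ℂ) from hT.mulVec_eigenvectorBasis i),
    dotProduct_sub] at hv
  have hsm : (hT.eigenvalues i • ((WithLp.equiv 2 (ι → ℂ)) (hT.eigenvectorBasis i)) : ι → ℂ)
      = ((hT.eigenvalues i : ℂ)) • ((WithLp.equiv 2 (ι → ℂ)) (hT.eigenvectorBasis i)) := by
    funext j; simp [Complex.real_smul]
  rw [hsm, dotProduct_smul, dotProduct_smul, dot_self_one hT i] at hv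
  simp only [smul_eq_mul, mul_one] at hv
  have := (Complex.nonneg_iff.mp hv).1
  simp only [Complex.sub_re, Complex.ofReal_re] at this
  linarith

lemma neg_eig_le_of_psd {T : Matrix ι ι ℂ} (hT : T.IsHermitian) {c : ℝ}
    (h : (((c : ℂ) • 1 + T)).PosSemidef) (i : ι) : -c ≤ hT.eigenvalues i := by
  have hv := h.dotProduct_mulVec_nonneg ((WithLp.equiv 2 (ι → ℂ)) (hT.eigenvectorBasis i))
  rw [Matrix.add_mulVec, Matrix.smul_mulVec, Matrix.one_mulVec,
    (show T *ᵥ (WithLp.equiv 2 (ι → ℂ)) (hT.eigenvectorBasis i) = (hT.eigenvalues i •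
      (WithLp.equiv 2 (ι → ℂ)) (hT.eigenvectorBasis i) : ι → ℂ) from hT.mulVec_eigenvectorBasis i),
    dotProduct_add] at hv
  have hsm : (hT.eigenvalues i • ((WithLp.equiv 2 (ι → ℂ)) (hT.eigenvectorBasis i)) : ι → ℂ)
      = ((hT.eigenvalues i : ℂ)) • ((WithLp.equiv 2 (ι → ℂ)) (hT.eigenvectorBasis i)) := by
    funext j; simp [Complex.real_smul]
  rw [hsm, dotProduct_smul, dotProduct_smul, dot_self_one hT i] at hv
  simp only [smul_eq_mul, mul_one] at hv
  have := (Complex.nonneg_iff.mp hv).1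
  simp only [Complex.add_re, Complex.ofReal_re] at this
  linarith

lemma diag_norm_le {d : ι → ℂ} {c : ℝ} (hc : 0 ≤ c) (h : ∀ i, ‖d i‖ ≤ c) :
    ‖Matrix.diagonal d‖ ≤ c := by
  refine l2norm_le_of_sq hc fun v => ?_
  rw [Finset.mul_sum]
  refine Finset.sum_le_sum fun i _ => ?_
  rw [Matrix.mulVec_diagonal, norm_mul, mul_pow]
  have h1 : ‖d i‖ ^ 2 ≤ c ^ 2 := by
    have := h i
    nlinarith [norm_nonneg (d i)]
  nlinarith [sq_nonneg ‖v i‖, norm_nonneg (v i)]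

lemma norm_le_of_eigs {T : Matrix ι ι ℂ} (hT : T.IsHermitian) {c : ℝ} (hc : 0 ≤ c)
    (h : ∀ i, |hT.eigenvalues i| ≤ c) : ‖T‖ ≤ c := by
  conv_lhs => rw [hT.spectral_theorem, Unitary.conjStarAlgAut_apply]
  rw [mul_assoc, CStarRing.norm_mem_unitary_mul _ (hT.eigenvectorUnitary).2,
    CStarRing.norm_mul_mem_unitary _ (Unitary.star_mem (hT.eigenvectorUnitary).2)]
  refine diag_norm_le hc fun i => ?_
  simpa using h i

lemma norm_le_one_of_psd {T : Matrix ι ι ℂ} (h1 : ((1 : Matrix ι ι ℂ) - T).PosSemidef)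
    (h2 : ((1 : Matrix ι ι ℂ) + T).PosSemidef) : ‖T‖ ≤ 1 := by
  have hT : T.IsHermitian := by
    have := (Matrix.isHermitian_one (n := ι) (α := ℂ)).sub h1.1
    simpa using this
  refine norm_le_of_eigs hT zero_le_one fun i => ?_
  rw [abs_le]
  constructor
  · refine neg_eig_le_of_psd hT ?_ i
    have : ((1:ℝ) : ℂ) • (1 : Matrix ι ι ℂ) + T = 1 + T := by
      rw [Complex.ofReal_one, one_smul]
    rwa [this]
  · refine eig_le_of_psd hT ?_ i
    have : ((1:ℝ) : ℂ) • (1 : Matrix ι ι ℂ) - T = 1 - T := by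
      rw [Complex.ofReal_one, one_smul]
    rwa [this]

lemma sum_split {δ α β γ : Type*} [Fintype δ] [Fintype α] [Fintype β] [Fintype γ]
    {R : Type*} [AddCommMonoid R] (e : α ≃ β ⊕ γ) (f : δ × α → R) :
    ∑ q : δ × α, f q = (∑ d, ∑ b, f (d, e.symm (Sum.inl b)))
      + ∑ d, ∑ c, f (d, e.symm (Sum.inr c)) := by
  rw [Fintype.sum_prod_type, ← Finset.sum_add_distrib]
  refine Finset.sum_congr rfl fun d _ => ?_
  rw [← Equiv.sum_comp e.symm (fun t => f (d, t)), Fintype.sum_sum_type]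

end Stmt10Aux

namespace Stmt10Aux

/-- Splitting `Fin (2*k)` into two halves. -/
def esum (k : ℕ) : Fin (2 * k) ≃ Fin k ⊕ Fin k :=
  (finCongr (two_mul k)).trans finSumFinEquiv.symm

/-- The self-adjoint "off-diagonal" dilation of `M`, living in `Mₙ ⊗ M_{2k}`. -/
def xmat {n k : ℕ} (M : Matrix (Fin k × Fin n) (Fin k × Fin n) ℂ) :
    Matrix (Fin n × Fin (2 * k)) (Fin n × Fin (2 * k)) ℂ := fun p q =>
  Sum.elim
    (fun s' => Sum.elim (fun _ => (0 : ℂ)) (fun t' => star (M (t', q.1) (s', p.1)))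
      (esum k q.2))
    (fun s' => Sum.elim (fun t' => M (s', p.1) (t', q.1)) (fun _ => (0 : ℂ))
      (esum k q.2))
    (esum k p.2)

variable {n k : ℕ} {M : Matrix (Fin k × Fin n) (Fin k × Fin n) ℂ}

lemma xmat_ll (a b : Fin n) (s' t' : Fin k) :
    xmat M (a, (esum k).symm (Sum.inl s')) (b, (esum k).symm (Sum.inl t')) = 0 := by
  simp [xmat]

lemma xmat_lr (a b : Fin n) (s' t' : Fin k) :
    xmat M (a, (esum k).symm (Sum.inl s')) (b, (esum k).symm (Sum.inr t'))
      = star (M (t', b) (s', a)) := by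
  simp [xmat]

lemma xmat_rl (a b : Fin n) (s' t' : Fin k) :
    xmat M (a, (esum k).symm (Sum.inr s')) (b, (esum k).symm (Sum.inl t'))
      = M (s', a) (t', b) := by
  simp [xmat]

lemma xmat_rr (a b : Fin n) (s' t' : Fin k) :
    xmat M (a, (esum k).symm (Sum.inr s')) (b, (esum k).symm (Sum.inr t')) = 0 := by
  simp [xmat]

lemma xmat_herm : (xmat M).IsHermitian := by
  rw [Matrix.IsHermitian]
  ext ⟨a, s⟩ ⟨b, t⟩
  rw [Matrix.conjTranspose_apply]
  rcases hs : esum k s with s' | s' <;> rcases ht : esum k t with t' | t' <;>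
    simp [xmat, hs, ht]

lemma xmat_norm_le : ‖xmat M‖ ≤ ‖M‖ := by
  refine l2norm_le_of_sq (norm_nonneg M) fun u => ?_
  set e := esum k with he
  set u₁ : Fin k × Fin n → ℂ := fun cb => u (cb.2, e.symm (Sum.inl cb.1)) with hu₁
  set u₂ : Fin k × Fin n → ℂ := fun cb => u (cb.2, e.symm (Sum.inr cb.1)) with hu₂
  have hA : ∀ (a : Fin n) (s' : Fin k),
      (xmat M *ᵥ u) (a, e.symm (Sum.inl s')) = (Mᴴ *ᵥ u₂) (s', a) := by
    intro a s'
    have h0 : (xmat M *ᵥ u) (a, e.symm (Sum.inl s'))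
        = ∑ q : Fin n × Fin (2 * k), xmat M (a, e.symm (Sum.inl s')) q * u q := rfl
    rw [h0, sum_split e (fun q => xmat M (a, e.symm (Sum.inl s')) q * u q)]
    have hz : (∑ b, ∑ t', xmat M (a, e.symm (Sum.inl s')) (b, e.symm (Sum.inl t'))
        * u (b, e.symm (Sum.inl t'))) = 0 := by
      refine Finset.sum_eq_zero fun b _ => Finset.sum_eq_zero fun t' _ => ?_
      rw [xmat_ll, zero_mul]
    rw [hz, zero_add]
    have h1 : (Mᴴ *ᵥ u₂) (s', a) = ∑ q : Fin k × Fin n, Mᴴ (s', a) q * u₂ q := rfl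
    rw [h1, Fintype.sum_prod_type, Finset.sum_comm]
    refine Finset.sum_congr rfl fun b _ => Finset.sum_congr rfl fun t' _ => ?_
    rw [xmat_lr, Matrix.conjTranspose_apply]
  have hB : ∀ (a : Fin n) (s' : Fin k),
      (xmat M *ᵥ u) (a, e.symm (Sum.inr s')) = (M *ᵥ u₁) (s', a) := by
    intro a s'
    have h0 : (xmat M *ᵥ u) (a, e.symm (Sum.inr s'))
        = ∑ q : Fin n × Fin (2 * k), xmat M (a, e.symm (Sum.inr s')) q * u q := rfl
    rw [h0, sum_split e (fun q => xmat M (a, e.symm (Sum.inr s')) q * u q)]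
    have hz : (∑ b, ∑ t', xmat M (a, e.symm (Sum.inr s')) (b, e.symm (Sum.inr t'))
        * u (b, e.symm (Sum.inr t'))) = 0 := by
      refine Finset.sum_eq_zero fun b _ => Finset.sum_eq_zero fun t' _ => ?_
      rw [xmat_rr, zero_mul]
    rw [hz, add_zero]
    have h1 : (M *ᵥ u₁) (s', a) = ∑ q : Fin k × Fin n, M (s', a) q * u₁ q := rfl
    rw [h1, Fintype.sum_prod_type, Finset.sum_comm]
    refine Finset.sum_congr rfl fun b _ => Finset.sum_congr rfl fun t' _ => ?_
    rw [xmat_rl]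
  calc ∑ p : Fin n × Fin (2 * k), ‖(xmat M *ᵥ u) p‖ ^ 2
      = (∑ a : Fin n, ∑ s' : Fin k, ‖(xmat M *ᵥ u) (a, e.symm (Sum.inl s'))‖ ^ 2)
        + ∑ a : Fin n, ∑ s' : Fin k, ‖(xmat M *ᵥ u) (a, e.symm (Sum.inr s'))‖ ^ 2 :=
        sum_split e _
    _ = (∑ a : Fin n, ∑ s' : Fin k, ‖(Mᴴ *ᵥ u₂) (s', a)‖ ^ 2)
        + ∑ a : Fin n, ∑ s' : Fin k, ‖(M *ᵥ u₁) (s', a)‖ ^ 2 := by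
        congr 1 <;> refine Finset.sum_congr rfl fun a _ => Finset.sum_congr rfl fun s' _ => ?_
        · rw [hA]
        · rw [hB]
    _ = (∑ p : Fin k × Fin n, ‖(Mᴴ *ᵥ u₂) p‖ ^ 2)
        + ∑ p : Fin k × Fin n, ‖(M *ᵥ u₁) p‖ ^ 2 := by
        rw [Fintype.sum_prod_type, Fintype.sum_prod_type, Finset.sum_comm]
        congr 1
        rw [Finset.sum_comm]
    _ ≤ (‖Mᴴ‖ ^ 2 * ∑ p : Fin k × Fin n, ‖u₂ p‖ ^ 2)
        + ‖M‖ ^ 2 * ∑ p : Fin k × Fin n, ‖u₁ p‖ ^ 2 :=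
        add_le_add (sq_sum_mulVec_le _ _) (sq_sum_mulVec_le _ _)
    _ = ‖M‖ ^ 2 * ((∑ p : Fin k × Fin n, ‖u₁ p‖ ^ 2)
        + ∑ p : Fin k × Fin n, ‖u₂ p‖ ^ 2) := by
        rw [Matrix.l2_opNorm_conjTranspose]; ring
    _ = ‖M‖ ^ 2 * ∑ q : Fin n × Fin (2 * k), ‖u q‖ ^ 2 := by
        congr 1
        rw [sum_split e (fun q => ‖u q‖ ^ 2)]
        congr 1
        · rw [Fintype.sum_prod_type, Finset.sum_comm]
        · rw [Fintype.sum_prod_type, Finset.sum_comm]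

end Stmt10Aux

namespace Stmt10Aux

variable {nn mm : ℕ} {ι : Type*} [Fintype ι] [DecidableEq ι]

/-- `φ ⊗ Id` acting on `Mₙ ⊗ M_ι`. -/
def psiMap (φ : Matrix (Fin nn) (Fin nn) ℂ →ₗ[ℂ] Matrix (Fin mm) (Fin mm) ℂ) :
    Matrix (Fin nn × ι) (Fin nn × ι) ℂ →ₗ[ℂ] Matrix (Fin mm × ι) (Fin mm × ι) ℂ where
  toFun X := fun p q => φ (fun a b => X (a, p.2) (b, q.2)) p.1 q.1
  map_add' X Y := by
    funext p q
    show φ ((fun a b => X (a, p.2) (b, q.2)) + fun a b => Y (a, p.2) (b, q.2)) p.1 q.1 = _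
    exact congrFun (congrFun (map_add φ (fun a b => X (a, p.2) (b, q.2))
      (fun a b => Y (a, p.2) (b, q.2))) p.1) q.1
  map_smul' c X := by
    funext p q
    show φ (c • fun a b => X (a, p.2) (b, q.2)) p.1 q.1 = _
    exact congrFun (congrFun (_root_.map_smul φ c (fun a b => X (a, p.2) (b, q.2))) p.1) q.1

lemma psiMap_apply (φ : Matrix (Fin nn) (Fin nn) ℂ →ₗ[ℂ] Matrix (Fin mm) (Fin mm) ℂ)
    (X : Matrix (Fin nn × ι) (Fin nn × ι) ℂ) (p q : Fin mm × ι) :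
    psiMap φ X p q = φ (fun a b => X (a, p.2) (b, q.2)) p.1 q.1 := rfl

lemma psiMap_kron (φ : Matrix (Fin nn) (Fin nn) ℂ →ₗ[ℂ] Matrix (Fin mm) (Fin mm) ℂ)
    (P : Matrix (Fin nn) (Fin nn) ℂ) (Q : Matrix ι ι ℂ) :
    psiMap φ (P ⊗ₖ Q) = (φ P) ⊗ₖ Q := by
  ext ⟨i, s⟩ ⟨j, t⟩
  rw [psiMap_apply]
  have h1 : (fun a b => (P ⊗ₖ Q) (a, s) (b, t)) = Q s t • P := by
    funext a b
    simp only [Matrix.kroneckerMap_apply, Matrix.smul_apply, smul_eq_mul]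
    ring
  rw [h1, _root_.map_smul]
  simp only [Matrix.kroneckerMap_apply, Matrix.smul_apply, smul_eq_mul]
  ring

lemma psiMap_one (φ : Matrix (Fin nn) (Fin nn) ℂ →ₗ[ℂ] Matrix (Fin mm) (Fin mm) ℂ) :
    psiMap (ι := ι) φ 1 = (φ 1) ⊗ₖ (1 : Matrix ι ι ℂ) := by
  rw [← psiMap_kron, Matrix.one_kronecker_one]

lemma psiMap_psd (φ : Matrix (Fin nn) (Fin nn) ℂ →ₗ[ℂ] Matrix (Fin mm) (Fin mm) ℂ)
    (hpos : ∀ A : Matrix (Fin nn) (Fin nn) ℂ, A.PosSemidef → (φ A).PosSemidef)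
    {K : ℕ} (X : Matrix (Fin nn × Fin K) (Fin nn × Fin K) ℂ) (hX : X ∈ Separable nn K) :
    (psiMap φ X).PosSemidef := by
  have hcont : Continuous (psiMap (ι := Fin K) φ) :=
    (psiMap (ι := Fin K) φ).continuous_of_finiteDimensional
  have hmap : Set.MapsTo (psiMap (ι := Fin K) φ)
      {Y | ∃ (N : ℕ) (P : Fin N → Matrix (Fin nn) (Fin nn) ℂ)
        (Q : Fin N → Matrix (Fin K) (Fin K) ℂ),
        (∀ t, (P t).PosSemidef) ∧ (∀ t, (Q t).PosSemidef) ∧ Y = ∑ t, P t ⊗ₖ Q t}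
      {A | A.PosSemidef} := by
    rintro Y ⟨N, P, Q, hP, hQ, rfl⟩
    rw [map_sum]
    refine posSemidef_sum _ fun t => ?_
    rw [psiMap_kron]
    exact posSemidef_kron (hpos _ (hP t)) (hQ t)
  have := map_mem_closure hcont hX hmap
  rwa [isClosed_posSemidef.closure_eq] at this

end Stmt10Aux

/-- if for some `r > 0`, for all `k`, every self-adjoint
`x ∈ Mₙ ⊗ M_{2k}` with `‖x‖ ≤ r` has `1 ⊗ 1 − x` separable, then every positive
contractive linear map `φ : Mₙ(ℂ) → M_m(ℂ)` satisfies `‖φ‖_cb ≤ 1/r`. -/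
theorem stmt10 (n m : ℕ) (r : ℝ) (hr : 0 < r)
    (hsep : ∀ (k : ℕ) (x : Matrix (Fin n × Fin (2 * k)) (Fin n × Fin (2 * k)) ℂ),
      x.IsHermitian → ‖x‖ ≤ r → (1 - x) ∈ Separable n (2 * k))
    (φ : Matrix (Fin n) (Fin n) ℂ →ₗ[ℂ] Matrix (Fin m) (Fin m) ℂ)
    (hpos : ∀ M : Matrix (Fin n) (Fin n) ℂ, M.PosSemidef → (φ M).PosSemidef)
    (hcontr : ∀ M : Matrix (Fin n) (Fin n) ℂ, ‖φ M‖ ≤ ‖M‖) :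
    ∀ (k : ℕ) (M : Matrix (Fin k × Fin n) (Fin k × Fin n) ℂ),
      ‖amp (φ ·) k M‖ ≤ (1 / r) * ‖M‖ := by
  intro k M
  have key : ∀ M' : Matrix (Fin k × Fin n) (Fin k × Fin n) ℂ, ‖M'‖ ≤ r →
      ‖amp (φ ·) k M'‖ ≤ 1 := by
    clear M
    intro M hM
    set e := Stmt10Aux.esum k with hedef
    set x := Stmt10Aux.xmat M with hxdef
    have hxh : x.IsHermitian := Stmt10Aux.xmat_herm
    have hxn : ‖x‖ ≤ r := le_trans Stmt10Aux.xmat_norm_le hM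
    have hs1 := hsep k x hxh hxn
    have hs2 := hsep k (-x) hxh.neg (by rwa [norm_neg])
    rw [sub_neg_eq_add] at hs2
    set Ψ := Stmt10Aux.psiMap (ι := Fin (2 * k)) φ with hΨdef
    have hps1 : (Ψ (1 - x)).PosSemidef := Stmt10Aux.psiMap_psd φ hpos _ hs1
    have hps2 : (Ψ (1 + x)).PosSemidef := Stmt10Aux.psiMap_psd φ hpos _ hs2
    rw [map_sub, Stmt10Aux.psiMap_one] at hps1
    rw [map_add, Stmt10Aux.psiMap_one] at hps2
    have hpsd1 : (φ 1).PosSemidef := hpos 1 Matrix.PosSemidef.one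
    have hn1 : ‖φ 1‖ ≤ 1 := le_trans (hcontr 1) Stmt10Aux.norm_one_le
    have hsub : ((1 : Matrix (Fin m) (Fin m) ℂ) - φ 1).PosSemidef :=
      Stmt10Aux.psd_one_sub hpsd1 hn1
    have hk : (((1 : Matrix (Fin m) (Fin m) ℂ) - φ 1) ⊗ₖ
        (1 : Matrix (Fin (2 * k)) (Fin (2 * k)) ℂ)).PosSemidef :=
      Stmt10Aux.posSemidef_kron hsub Matrix.PosSemidef.one
    have hkr : ((1 : Matrix (Fin m) (Fin m) ℂ) - φ 1) ⊗ₖ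
        (1 : Matrix (Fin (2 * k)) (Fin (2 * k)) ℂ) = 1 - (φ 1) ⊗ₖ 1 := by
      rw [← Matrix.one_kronecker_one]
      ext ⟨i, s⟩ ⟨j, t⟩
      simp only [Matrix.kroneckerMap_apply, Matrix.sub_apply, sub_mul]
    rw [hkr] at hk
    have hfin1 : ((1 : Matrix (Fin m × Fin (2 * k)) (Fin m × Fin (2 * k)) ℂ)
        - Ψ x).PosSemidef := by
      have heq : (1 : Matrix (Fin m × Fin (2 * k)) (Fin m × Fin (2 * k)) ℂ) - Ψ x
          = (1 - (φ 1) ⊗ₖ 1) + ((φ 1) ⊗ₖ 1 - Ψ x) := by abel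
      rw [heq]; exact hk.add hps1
    have hfin2 : ((1 : Matrix (Fin m × Fin (2 * k)) (Fin m × Fin (2 * k)) ℂ)
        + Ψ x).PosSemidef := by
      have heq : (1 : Matrix (Fin m × Fin (2 * k)) (Fin m × Fin (2 * k)) ℂ) + Ψ x
          = (1 - (φ 1) ⊗ₖ 1) + ((φ 1) ⊗ₖ 1 + Ψ x) := by abel
      rw [heq]; exact hk.add hps2
    have hΨn : ‖Ψ x‖ ≤ 1 := Stmt10Aux.norm_le_one_of_psd hfin1 hfin2
    have hampn : ‖amp (φ ·) k M‖ ≤ ‖Ψ x‖ := by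
      refine Stmt10Aux.l2norm_le_of_sq (norm_nonneg _) fun v => ?_
      set w : Fin m × Fin (2 * k) → ℂ :=
        fun jt => Sum.elim (fun t' => v (t', jt.1)) (fun _ => (0 : ℂ)) (e jt.2) with hw
      have hw1 : ∀ (j : Fin m) (t' : Fin k), w (j, e.symm (Sum.inl t')) = v (t', j) := by
        intro j t'; simp [hw, hedef]
      have hw2 : ∀ (j : Fin m) (t' : Fin k), w (j, e.symm (Sum.inr t')) = 0 := by
        intro j t'; simp [hw, hedef]
      have hkey : ∀ (i : Fin m) (s' : Fin k),
          (Ψ x *ᵥ w) (i, e.symm (Sum.inr s')) = (amp (φ ·) k M *ᵥ v) (s', i) := by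
        intro i s'
        have h0 : (Ψ x *ᵥ w) (i, e.symm (Sum.inr s'))
            = ∑ q : Fin m × Fin (2 * k), Ψ x (i, e.symm (Sum.inr s')) q * w q := rfl
        rw [h0, Stmt10Aux.sum_split e (fun q => Ψ x (i, e.symm (Sum.inr s')) q * w q)]
        have hz : (∑ j, ∑ t', Ψ x (i, e.symm (Sum.inr s')) (j, e.symm (Sum.inr t'))
            * w (j, e.symm (Sum.inr t'))) = 0 := by
          refine Finset.sum_eq_zero fun j _ => Finset.sum_eq_zero fun t' _ => ?_
          rw [hw2, mul_zero]
        rw [hz, add_zero]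
        have hmid : ∀ (j : Fin m) (t' : Fin k),
            Ψ x (i, e.symm (Sum.inr s')) (j, e.symm (Sum.inl t')) * w (j, e.symm (Sum.inl t'))
            = amp (φ ·) k M (s', i) (t', j) * v (t', j) := by
          intro j t'
          rw [hw1]
          have hterm : Ψ x (i, e.symm (Sum.inr s')) (j, e.symm (Sum.inl t'))
              = amp (φ ·) k M (s', i) (t', j) := by
            have hsl : (fun a b => x (a, e.symm (Sum.inr s')) (b, e.symm (Sum.inl t')))
                = fun a b => M (s', a) (t', b) := by
              funext a b
              exact Stmt10Aux.xmat_rl a b s' t'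
            show φ (fun a b => x (a, e.symm (Sum.inr s')) (b, e.symm (Sum.inl t'))) i j
              = φ (fun a b => M (s', a) (t', b)) i j
            rw [hsl]
          rw [hterm]
        calc (∑ j : Fin m, ∑ t' : Fin k, Ψ x (i, e.symm (Sum.inr s')) (j, e.symm (Sum.inl t'))
              * w (j, e.symm (Sum.inl t')))
            = ∑ j : Fin m, ∑ t' : Fin k, amp (φ ·) k M (s', i) (t', j) * v (t', j) :=
              Finset.sum_congr rfl fun j _ => Finset.sum_congr rfl fun t' _ => hmid j t'
          _ = (amp (φ ·) k M *ᵥ v) (s', i) := by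
              rw [show (amp (φ ·) k M *ᵥ v) (s', i)
                = ∑ q : Fin k × Fin m, amp (φ ·) k M (s', i) q * v q from rfl,
                Fintype.sum_prod_type]
              exact Finset.sum_comm
      have hwsum : ∑ q : Fin m × Fin (2 * k), ‖w q‖ ^ 2
          = ∑ p : Fin k × Fin m, ‖v p‖ ^ 2 := by
        rw [Stmt10Aux.sum_split e (fun q => ‖w q‖ ^ 2)]
        have hz : (∑ j, ∑ t' : Fin k, ‖w (j, e.symm (Sum.inr t'))‖ ^ 2) = 0 := by
          refine Finset.sum_eq_zero fun j _ => Finset.sum_eq_zero fun t' _ => ?_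
          rw [hw2, norm_zero, zero_pow two_ne_zero]
        rw [hz, add_zero, Fintype.sum_prod_type, Finset.sum_comm]
        refine Finset.sum_congr rfl fun t' _ => Finset.sum_congr rfl fun j _ => ?_
        rw [hw1]
      calc ∑ p : Fin k × Fin m, ‖(amp (φ ·) k M *ᵥ v) p‖ ^ 2
          = ∑ i : Fin m, ∑ s' : Fin k, ‖(Ψ x *ᵥ w) (i, e.symm (Sum.inr s'))‖ ^ 2 := by
            rw [Fintype.sum_prod_type, Finset.sum_comm]
            exact Finset.sum_congr rfl fun i _ => Finset.sum_congr rfl fun s' _ => by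
              rw [hkey]
        _ ≤ ∑ q : Fin m × Fin (2 * k), ‖(Ψ x *ᵥ w) q‖ ^ 2 := by
            rw [Stmt10Aux.sum_split e (fun q => ‖(Ψ x *ᵥ w) q‖ ^ 2)]
            exact le_add_of_nonneg_left (Finset.sum_nonneg fun _ _ =>
              Finset.sum_nonneg fun _ _ => sq_nonneg _)
        _ ≤ ‖Ψ x‖ ^ 2 * ∑ q, ‖w q‖ ^ 2 := Stmt10Aux.sq_sum_mulVec_le _ _
        _ = ‖Ψ x‖ ^ 2 * ∑ p, ‖v p‖ ^ 2 := by rw [hwsum]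
    exact le_trans hampn hΨn
  by_cases hM0 : M = 0
  · have hz : amp (φ ·) k M = 0 := by
      rw [hM0]
      funext p q
      show φ (fun a b => (0 : Matrix (Fin k × Fin n) (Fin k × Fin n) ℂ) (p.1, a) (q.1, b))
        p.2 q.2 = 0
      have h0 : (fun a b => (0 : Matrix (Fin k × Fin n) (Fin k × Fin n) ℂ) (p.1, a) (q.1, b))
          = (0 : Matrix (Fin n) (Fin n) ℂ) := rfl
      rw [h0, map_zero]
      rfl
    rw [hz, hM0, norm_zero, norm_zero, mul_zero]
  · have hMn : 0 < ‖M‖ := norm_pos_iff.mpr hM0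
    set c : ℝ := r / ‖M‖ with hc
    have hc0 : 0 < c := div_pos hr hMn
    have hnorm : ‖((c : ℂ)) • M‖ = r := by
      rw [norm_smul, Complex.norm_real, Real.norm_eq_abs, abs_of_pos hc0, hc,
        div_mul_cancel₀ _ (ne_of_gt hMn)]
    have h2 := key ((c : ℂ) • M) (le_of_eq hnorm)
    have h3 : amp (φ ·) k ((c : ℂ) • M) = (c : ℂ) • amp (φ ·) k M := by
      funext p q
      show φ (fun a b => ((c : ℂ) • M) (p.1, a) (q.1, b)) p.2 q.2 = _
      have h0 : (fun a b => ((c : ℂ) • M) (p.1, a) (q.1, b))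
          = (c : ℂ) • (fun a b => M (p.1, a) (q.1, b)) := rfl
      rw [h0]
      exact congrFun (congrFun (_root_.map_smul φ (c : ℂ) (fun a b => M (p.1, a) (q.1, b))) p.2) q.2
    rw [h3, norm_smul, Complex.norm_real, Real.norm_eq_abs, abs_of_pos hc0] at h2
    have h4 : r * ‖amp (φ ·) k M‖ ≤ ‖M‖ := by
      have h5 := mul_le_mul_of_nonneg_right h2 (le_of_lt hMn)
      rw [one_mul] at h5
      calc r * ‖amp (φ ·) k M‖ = c * ‖amp (φ ·) k M‖ * ‖M‖ := by
            rw [hc]; field_simp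
        _ ≤ ‖M‖ := h5
    rw [one_div, inv_mul_eq_div, le_div_iff₀ hr, mul_comm]
    exact h4
end

section
/- Suppose every unital positive map φ : M_n(ℂ) → M_m(ℂ) satisfies ‖φ‖_cb ≤ 1/r for some r > 0 (for all m). Then for every self-adjoint x ∈ M_n ⊗ M_m with ‖x‖ ≤ r, the element 1_n ⊗ 1_m − x is separable. -/
set_option linter.unusedSectionVars false

open Matrix ComplexOrder Kronecker
open scoped Matrix.Norms.L2Operator

namespace Stmt11Aux

/-! ### Generic auxiliary lemmas -/

section Generic

variable {p q : Type*} [Fintype p] [DecidableEq p] [Fintype q] [DecidableEq q]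

lemma trace_mul_real {V A : Matrix p p ℂ} (hV : V.IsHermitian) (hA : A.IsHermitian) :
    (V * A).trace = (((V * A).trace).re : ℂ) := by
  have h : (starRingEnd ℂ) ((V * A).trace) = (V * A).trace := by
    have h2 : ((V * A)ᴴ).trace = star ((V * A).trace) := Matrix.trace_conjTranspose _
    rw [conjTranspose_mul, hV.eq, hA.eq, Matrix.trace_mul_comm] at h2
    exact h2.symm
  exact (Complex.conj_eq_iff_re.mp h).symm

noncomputable def Wof (f : Matrix p p ℂ →L[ℝ] ℝ) : Matrix p p ℂ :=
  Matrix.of fun i j => (f (Matrix.single j i 1) : ℂ)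
    - Complex.I * (f (Complex.I • Matrix.single j i 1) : ℂ)

lemma re_trace_Wof_mul (f : Matrix p p ℂ →L[ℝ] ℝ) (B : Matrix p p ℂ) :
    ((Wof f * B).trace).re = f B := by
  have hB : B = ∑ i : p, ∑ j : p,
      ((B i j).re • Matrix.single i j 1 + (B i j).im • (Complex.I • Matrix.single i j 1)) := by
    conv_lhs => rw [matrix_eq_sum_single B]
    refine Finset.sum_congr rfl fun i _ => Finset.sum_congr rfl fun j _ => ?_
    ext a b
    simp only [Matrix.add_apply, Matrix.smul_apply, Matrix.single, Matrix.of_apply,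
      smul_ite, smul_zero]
    split
    · simp [Complex.real_smul, Complex.re_add_im]
    · simp
  have hRHS : f B = ∑ i : p, ∑ j : p,
      ((B i j).re * f (Matrix.single i j 1)
        + (B i j).im * f (Complex.I • Matrix.single i j 1)) := by
    conv_lhs => rw [hB]
    rw [map_sum]
    refine Finset.sum_congr rfl fun i _ => ?_
    rw [map_sum]
    refine Finset.sum_congr rfl fun j _ => ?_
    rw [map_add, f.map_smul, f.map_smul]
    simp [smul_eq_mul]
  have hLHS : ((Wof f * B).trace).re = ∑ i : p, ∑ j : p,
      (f (Matrix.single j i 1) * (B j i).re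
        + f (Complex.I • Matrix.single j i 1) * (B j i).im) := by
    rw [Matrix.trace, Complex.re_sum]
    refine Finset.sum_congr rfl fun i _ => ?_
    rw [Matrix.diag_apply, Matrix.mul_apply, Complex.re_sum]
    refine Finset.sum_congr rfl fun j _ => ?_
    simp [Wof, Complex.sub_re, Complex.mul_re]
  rw [hLHS, hRHS, Finset.sum_comm]
  exact Finset.sum_congr rfl fun i _ => Finset.sum_congr rfl fun j _ => by ring

lemma norm_comp_equiv (e : q ≃ p) (u : p → ℂ) :
    ‖(WithLp.equiv 2 (q → ℂ)).symm (u ∘ e)‖ = ‖(WithLp.equiv 2 (p → ℂ)).symm u‖ := by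
  rw [EuclideanSpace.norm_eq, EuclideanSpace.norm_eq]
  congr 1
  refine Fintype.sum_equiv e _ _ fun i => ?_
  simp

lemma l2_opNorm_submatrix_le (e : q ≃ p) (y : Matrix p p ℂ) :
    ‖y.submatrix e e‖ ≤ ‖y‖ := by
  rw [Matrix.l2_opNorm_def]
  refine ContinuousLinearMap.opNorm_le_bound _ (norm_nonneg y) fun v => ?_
  have h1 : (Matrix.toEuclideanLin (y.submatrix e e)) v =
      (WithLp.equiv 2 (q → ℂ)).symm ((y *ᵥ ((WithLp.equiv 2 (p → ℂ)).symm
        ((WithLp.equiv 2 (q → ℂ) v) ∘ e.symm))) ∘ e) := by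
    rw [Matrix.toEuclideanLin_apply, Matrix.submatrix_mulVec_equiv]
    rfl
  show ‖(Matrix.toEuclideanLin (y.submatrix e e)) v‖ ≤ _
  rw [h1, norm_comp_equiv e]
  have h2 := Matrix.l2_opNorm_mulVec y ((WithLp.equiv 2 (p → ℂ)).symm
      ((WithLp.equiv 2 (q → ℂ) v) ∘ e.symm))
  refine le_trans (le_of_eq ?_) (le_trans h2 ?_)
  · rfl
  have h3 : ‖(WithLp.equiv 2 (p → ℂ)).symm ((WithLp.equiv 2 (q → ℂ) v) ∘ e.symm)‖ = ‖v‖ := by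
    have := norm_comp_equiv e.symm (WithLp.equiv 2 (q → ℂ) v)
    rw [this]
    simp
  rw [h3]

lemma l2_opNorm_submatrix (e : q ≃ p) (y : Matrix p p ℂ) :
    ‖y.submatrix e e‖ = ‖y‖ := by
  refine le_antisymm (l2_opNorm_submatrix_le e y) ?_
  have := l2_opNorm_submatrix_le e.symm (y.submatrix e e)
  rwa [Matrix.submatrix_submatrix, Equiv.self_comp_symm, Matrix.submatrix_id_id] at this

lemma quad_re_le (Z : Matrix p p ℂ) (v : p → ℂ) :
    (dotProduct (star v) (Z *ᵥ v)).re
      ≤ ‖Z‖ * ‖(WithLp.equiv 2 (p → ℂ)).symm v‖ ^ 2 := by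
  set v' : EuclideanSpace ℂ p := (WithLp.equiv 2 (p → ℂ)).symm v
  have h1 : dotProduct (star v) (Z *ᵥ v)
      = inner (𝕜 := ℂ) v' ((WithLp.equiv 2 (p → ℂ)).symm (Z *ᵥ v)) :=
    (dotProduct_comm _ _).trans (EuclideanSpace.inner_toLp_toLp v (Z *ᵥ v)).symm
  rw [h1]
  calc (inner (𝕜 := ℂ) v' ((WithLp.equiv 2 (p → ℂ)).symm (Z *ᵥ v))).re
      ≤ ‖(inner (𝕜 := ℂ) v' ((WithLp.equiv 2 (p → ℂ)).symm (Z *ᵥ v)))‖ :=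
        Complex.re_le_norm _
    _ ≤ ‖v'‖ * ‖(WithLp.equiv 2 (p → ℂ)).symm (Z *ᵥ v)‖ := norm_inner_le_norm _ _
    _ ≤ ‖v'‖ * (‖Z‖ * ‖v'‖) := by
        refine mul_le_mul_of_nonneg_left ?_ (norm_nonneg _)
        exact Matrix.l2_opNorm_mulVec Z v'
    _ = ‖Z‖ * ‖v'‖ ^ 2 := by ring

lemma quad_self (v : p → ℂ) :
    (dotProduct (star v) v).re = ‖(WithLp.equiv 2 (p → ℂ)).symm v‖ ^ 2 := by
  set v' : EuclideanSpace ℂ p := (WithLp.equiv 2 (p → ℂ)).symm v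
  have h1 : dotProduct (star v) v = inner (𝕜 := ℂ) v' v' :=
    (dotProduct_comm _ _).trans (EuclideanSpace.inner_toLp_toLp v v).symm
  rw [h1, inner_self_eq_norm_sq_to_K]
  norm_cast

lemma posSemidef_real_smul {P : Matrix p p ℂ} (hP : P.PosSemidef)
    {c : ℝ} (hc : 0 ≤ c) : ((c : ℂ) • P).PosSemidef := by
  refine Matrix.PosSemidef.of_dotProduct_mulVec_nonneg ?_ ?_
  · show ((c : ℂ) • P)ᴴ = (c : ℂ) • P
    rw [Matrix.conjTranspose_smul, Complex.star_def, Complex.conj_ofReal, hP.1.eq]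
  · intro x
    rw [smul_mulVec, dotProduct_smul, smul_eq_mul]
    exact mul_nonneg (by exact_mod_cast hc) (hP.dotProduct_mulVec_nonneg x)

lemma psd_vecMulVec (v : p → ℂ) : (vecMulVec (star v) v).PosSemidef := by
  have h : vecMulVec (star v) v = (Matrix.replicateRow Unit v)ᴴ * Matrix.replicateRow Unit v := by
    ext a b
    simp [Matrix.mul_apply, Matrix.vecMulVec_apply, Matrix.replicateRow_apply, conjTranspose_apply,
      mul_comm]
  rw [h]
  exact posSemidef_conjTranspose_mul_self _

lemma trace_nonneg_of_psd {A : Matrix p p ℂ} (hA : A.PosSemidef) : 0 ≤ A.trace := by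
  have h : ∀ i, 0 ≤ A i i := by
    intro i
    have hstar : star ((Pi.single i (1 : ℂ)) : p → ℂ) = Pi.single i 1 := by
      ext j
      rcases eq_or_ne j i with h | h <;> simp [Pi.single_apply, h]
    have h2 := hA.dotProduct_mulVec_nonneg (Pi.single i 1)
    simpa [hstar] using h2
  exact Finset.sum_nonneg fun i _ => h i

end Generic

/-! ### The separable cone -/

def S0 (n m : ℕ) : Set (Matrix (Fin n × Fin m) (Fin n × Fin m) ℂ) :=
  {X | ∃ (N : ℕ) (P : Fin N → Matrix (Fin n) (Fin n) ℂ)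
    (Q : Fin N → Matrix (Fin m) (Fin m) ℂ),
    (∀ t, (P t).PosSemidef) ∧ (∀ t, (Q t).PosSemidef) ∧ X = ∑ t, P t ⊗ₖ Q t}

variable {n m : ℕ}

lemma separable_eq (n m : ℕ) : Separable n m = closure (S0 n m) := rfl

lemma zero_mem_S0 : (0 : Matrix (Fin n × Fin m) (Fin n × Fin m) ℂ) ∈ S0 n m :=
  ⟨0, Fin.elim0, Fin.elim0, fun t => t.elim0, fun t => t.elim0, by simp⟩

lemma prod_mem_S0 {P : Matrix (Fin n) (Fin n) ℂ} {Q : Matrix (Fin m) (Fin m) ℂ}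
    (hP : P.PosSemidef) (hQ : Q.PosSemidef) : P ⊗ₖ Q ∈ S0 n m :=
  ⟨1, fun _ => P, fun _ => Q, fun _ => hP, fun _ => hQ, by simp⟩

lemma add_mem_S0 {X Y : Matrix (Fin n × Fin m) (Fin n × Fin m) ℂ}
    (hX : X ∈ S0 n m) (hY : Y ∈ S0 n m) : X + Y ∈ S0 n m := by
  obtain ⟨N1, P1, Q1, hP1, hQ1, rfl⟩ := hX
  obtain ⟨N2, P2, Q2, hP2, hQ2, rfl⟩ := hY
  refine ⟨N1 + N2, Fin.append P1 P2, Fin.append Q1 Q2, fun t => ?_, fun t => ?_, ?_⟩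
  · refine Fin.addCases (fun i => ?_) (fun i => ?_) t
    · rw [Fin.append_left]; exact hP1 i
    · rw [Fin.append_right]; exact hP2 i
  · refine Fin.addCases (fun i => ?_) (fun i => ?_) t
    · rw [Fin.append_left]; exact hQ1 i
    · rw [Fin.append_right]; exact hQ2 i
  · rw [Fin.sum_univ_add]
    congr 1
    · exact Finset.sum_congr rfl fun i _ => by rw [Fin.append_left, Fin.append_left]
    · exact Finset.sum_congr rfl fun i _ => by rw [Fin.append_right, Fin.append_right]

lemma smul_mem_S0 {X : Matrix (Fin n × Fin m) (Fin n × Fin m) ℂ} {c : ℝ} (hc : 0 ≤ c)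
    (hX : X ∈ S0 n m) : c • X ∈ S0 n m := by
  obtain ⟨N, P, Q, hP, hQ, rfl⟩ := hX
  refine ⟨N, fun t => (c : ℂ) • P t, Q, fun t => posSemidef_real_smul (hP t) hc, hQ, ?_⟩
  rw [Finset.smul_sum]
  refine Finset.sum_congr rfl fun t _ => ?_
  rw [smul_kronecker]
  ext ij kl
  simp [Complex.real_smul]

lemma convex_S0 : Convex ℝ (S0 n m) := by
  intro X hX Y hY a b ha hb _
  exact add_mem_S0 (smul_mem_S0 ha hX) (smul_mem_S0 hb hY)

/-! ### The positive map associated to a witness -/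

noncomputable def phiFun (Vh : Matrix (Fin n × Fin m) (Fin n × Fin m) ℂ)
    (A : Matrix (Fin n) (Fin n) ℂ) : Matrix (Fin m) (Fin m) ℂ :=
  Matrix.of fun k l => (Vh * (A ⊗ₖ Matrix.single k l 1)).trace

def swapMat (y : Matrix (Fin n × Fin m) (Fin n × Fin m) ℂ) :
    Matrix (Fin m × Fin n) (Fin m × Fin n) ℂ :=
  y.submatrix (Equiv.prodComm (Fin m) (Fin n)) (Equiv.prodComm (Fin m) (Fin n))

def omega (m : ℕ) : Fin m × Fin m → ℂ := fun p => if p.1 = p.2 then 1 else 0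

lemma trace_mul_kronecker_decomp (Vh : Matrix (Fin n × Fin m) (Fin n × Fin m) ℂ)
    (A : Matrix (Fin n) (Fin n) ℂ) (B : Matrix (Fin m) (Fin m) ℂ) :
    (Vh * (A ⊗ₖ B)).trace = ∑ k : Fin m, ∑ l : Fin m, B k l * (phiFun Vh A k l) := by
  have hB : A ⊗ₖ B = ∑ k : Fin m, ∑ l : Fin m, B k l • (A ⊗ₖ Matrix.single k l 1) := by
    ext ⟨a, b⟩ ⟨c, d⟩
    simp only [Matrix.sum_apply, Matrix.smul_apply, kroneckerMap_apply, Matrix.single,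
      Matrix.of_apply, smul_eq_mul, mul_ite, mul_one, mul_zero, ite_and]
    rw [Finset.sum_eq_single b (fun k _ hk => Finset.sum_eq_zero fun l _ => by simp [hk])
      (fun h => absurd (Finset.mem_univ b) h)]
    rw [Finset.sum_eq_single d (fun l _ hl => by simp [hl]) (fun h => absurd (Finset.mem_univ d) h)]
    simp [mul_comm]
  rw [hB, Matrix.mul_sum, Matrix.trace_sum]
  refine Finset.sum_congr rfl fun k _ => ?_
  rw [Matrix.mul_sum, Matrix.trace_sum]
  refine Finset.sum_congr rfl fun l _ => ?_
  rw [Matrix.mul_smul, Matrix.trace_smul, smul_eq_mul]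
  rfl

lemma phiFun_quad (Vh : Matrix (Fin n × Fin m) (Fin n × Fin m) ℂ)
    (A : Matrix (Fin n) (Fin n) ℂ) (v : Fin m → ℂ) :
    dotProduct (star v) ((phiFun Vh A) *ᵥ v)
      = (Vh * (A ⊗ₖ vecMulVec (star v) v)).trace := by
  rw [trace_mul_kronecker_decomp]
  simp only [dotProduct, Matrix.mulVec, dotProduct, Pi.star_apply, vecMulVec_apply]
  refine Finset.sum_congr rfl fun k _ => ?_
  rw [Finset.mul_sum]
  refine Finset.sum_congr rfl fun l _ => ?_
  ring

lemma main_identity (Vh : Matrix (Fin n × Fin m) (Fin n × Fin m) ℂ)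
    (y : Matrix (Fin n × Fin m) (Fin n × Fin m) ℂ) :
    dotProduct (star (omega m)) ((amp (phiFun Vh) m (swapMat y)) *ᵥ (omega m))
      = (Vh * y).trace := by
  simp only [dotProduct, Matrix.mulVec, dotProduct, Pi.star_apply, omega,
    apply_ite (star : ℂ → ℂ), star_one, star_zero, ite_mul, one_mul, zero_mul, mul_ite, mul_one,
    mul_zero, Fintype.sum_prod_type]
  simp only [Finset.sum_ite_eq, Finset.mem_univ, if_true]
  have hterm : ∀ k l : Fin m, amp (phiFun Vh) m (swapMat y) (k, k) (l, l)
      = ∑ p : Fin n × Fin m, ∑ q : Fin n × Fin m,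
          (if k = q.2 then 1 else 0) * ((if l = p.2 then 1 else 0) * (Vh p q * y (q.1, k) (p.1, l))) := by
    intro k l
    show phiFun Vh (fun a b => swapMat y ((k, k).1, a) ((l, l).1, b)) k l = _
    simp only [phiFun, Matrix.of_apply, Matrix.trace, Matrix.diag_apply, Matrix.mul_apply,
      kroneckerMap_apply, Matrix.single, swapMat, Matrix.submatrix_apply, Equiv.prodComm_apply,
      Prod.swap, ite_and, mul_ite, mul_one, mul_zero, ite_mul, zero_mul, one_mul]
    refine Finset.sum_congr rfl fun p _ => Finset.sum_congr rfl fun q _ => ?_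
    split_ifs <;> simp [Matrix.kroneckerMap, *]
  simp only [hterm]
  have hcomm : (∑ k : Fin m, ∑ l : Fin m, ∑ p : Fin n × Fin m, ∑ q : Fin n × Fin m,
      (if k = q.2 then 1 else 0) * ((if l = p.2 then 1 else 0) * (Vh p q * y (q.1, k) (p.1, l))))
      = ∑ p : Fin n × Fin m, ∑ q : Fin n × Fin m, ∑ k : Fin m, ∑ l : Fin m,
      (if k = q.2 then 1 else 0) * ((if l = p.2 then 1 else 0) * (Vh p q * y (q.1, k) (p.1, l))) := by
    calc (∑ k : Fin m, ∑ l : Fin m, ∑ p : Fin n × Fin m, ∑ q : Fin n × Fin m,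
      (if k = q.2 then 1 else 0) * ((if l = p.2 then 1 else 0) * (Vh p q * y (q.1, k) (p.1, l))))
        = ∑ k : Fin m, ∑ p : Fin n × Fin m, ∑ l : Fin m, ∑ q : Fin n × Fin m,
          (if k = q.2 then 1 else 0) * ((if l = p.2 then 1 else 0) * (Vh p q * y (q.1, k) (p.1, l))) :=
          Finset.sum_congr rfl fun k _ => Finset.sum_comm
      _ = ∑ p : Fin n × Fin m, ∑ k : Fin m, ∑ l : Fin m, ∑ q : Fin n × Fin m,
          (if k = q.2 then 1 else 0) * ((if l = p.2 then 1 else 0) * (Vh p q * y (q.1, k) (p.1, l))) :=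
          Finset.sum_comm
      _ = ∑ p : Fin n × Fin m, ∑ k : Fin m, ∑ q : Fin n × Fin m, ∑ l : Fin m,
          (if k = q.2 then 1 else 0) * ((if l = p.2 then 1 else 0) * (Vh p q * y (q.1, k) (p.1, l))) :=
          Finset.sum_congr rfl fun p _ => Finset.sum_congr rfl fun k _ => Finset.sum_comm
      _ = ∑ p : Fin n × Fin m, ∑ q : Fin n × Fin m, ∑ k : Fin m, ∑ l : Fin m,
          (if k = q.2 then 1 else 0) * ((if l = p.2 then 1 else 0) * (Vh p q * y (q.1, k) (p.1, l))) :=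
          Finset.sum_congr rfl fun p _ => Finset.sum_comm
  rw [hcomm, Matrix.trace]
  refine Finset.sum_congr rfl fun p _ => ?_
  rw [Matrix.diag_apply, Matrix.mul_apply]
  refine Finset.sum_congr rfl fun q _ => ?_
  simp only [ite_mul, one_mul, zero_mul]
  have hx : ∀ x : Fin m, (∑ x_1 : Fin m,
      if x = q.2 then if x_1 = p.2 then Vh p q * y (q.1, x) (p.1, x_1) else 0 else 0)
      = if x = q.2 then Vh p q * y (q.1, x) (p.1, p.2) else 0 := by
    intro x
    split_ifs with h
    · simp [Finset.sum_ite_eq']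
    · simp
  simp only [hx, Finset.sum_ite_eq', Finset.mem_univ, if_true]

noncomputable def phiLin (Vh : Matrix (Fin n × Fin m) (Fin n × Fin m) ℂ) :
    Matrix (Fin n) (Fin n) ℂ →ₗ[ℂ] Matrix (Fin m) (Fin m) ℂ where
  toFun := phiFun Vh
  map_add' A B := by
    ext k l
    simp only [phiFun, Matrix.of_apply, Matrix.add_apply]
    rw [Matrix.add_kronecker, mul_add, Matrix.trace_add]
  map_smul' c A := by
    ext k l
    simp only [phiFun, Matrix.of_apply, Matrix.smul_apply, RingHom.id_apply]
    rw [Matrix.smul_kronecker, Matrix.mul_smul, Matrix.trace_smul]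

lemma stdBasisMatrix_conjTranspose (k l : Fin m) :
    (Matrix.single k l (1 : ℂ))ᴴ = Matrix.single l k 1 := by
  ext a b
  simp only [conjTranspose_apply, Matrix.single, Matrix.of_apply, ite_and]
  split_ifs <;> simp_all

lemma kron_conjTranspose (A : Matrix (Fin n) (Fin n) ℂ) (B : Matrix (Fin m) (Fin m) ℂ) :
    (A ⊗ₖ B)ᴴ = Aᴴ ⊗ₖ Bᴴ := by
  ext ⟨a, b⟩ ⟨c, d⟩
  simp [conjTranspose_apply, kroneckerMap_apply, mul_comm]

lemma kron_isHermitian {A : Matrix (Fin n) (Fin n) ℂ} {B : Matrix (Fin m) (Fin m) ℂ}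
    (hA : A.IsHermitian) (hB : B.IsHermitian) : (A ⊗ₖ B).IsHermitian := by
  show (A ⊗ₖ B)ᴴ = A ⊗ₖ B
  rw [kron_conjTranspose, hA.eq, hB.eq]

lemma phiFun_isHermitian {Vh : Matrix (Fin n × Fin m) (Fin n × Fin m) ℂ}
    (hVh : Vh.IsHermitian) {A : Matrix (Fin n) (Fin n) ℂ} (hA : A.IsHermitian) :
    (phiFun Vh A).IsHermitian := by
  rw [Matrix.IsHermitian]
  ext k l
  rw [conjTranspose_apply]
  show star ((Vh * (A ⊗ₖ Matrix.single l k 1)).trace) = (Vh * (A ⊗ₖ Matrix.single k l 1)).trace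
  rw [← Matrix.trace_conjTranspose, conjTranspose_mul, ← Matrix.trace_mul_comm, hVh.eq,
    kron_conjTranspose, hA.eq, stdBasisMatrix_conjTranspose]

lemma sum_ite_pull {α : Type*} [Fintype α] (c : Prop) [Decidable c] (f : α → ℂ) :
    (∑ x : α, if c then f x else 0) = if c then ∑ x : α, f x else 0 := by
  split_ifs <;> simp

lemma amp_conj {k : ℕ} (b : Matrix (Fin m) (Fin m) ℂ)
    (φ : Matrix (Fin n) (Fin n) ℂ → Matrix (Fin m) (Fin m) ℂ)
    (M : Matrix (Fin k × Fin n) (Fin k × Fin n) ℂ) :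
    amp (fun A => b * φ A * b) k M
      = ((1 : Matrix (Fin k) (Fin k) ℂ) ⊗ₖ b) * amp φ k M
          * ((1 : Matrix (Fin k) (Fin k) ℂ) ⊗ₖ b) := by
  ext p q
  show (b * φ (fun a c => M (p.1, a) (q.1, c)) * b) p.2 q.2 = _
  have hamp : ∀ w2 z2, amp φ k M (p.1, w2) (q.1, z2) = φ (fun a c => M (p.1, a) (q.1, c)) w2 z2 :=
    fun _ _ => rfl
  simp only [Matrix.mul_apply, kroneckerMap_apply, Matrix.one_apply, Fintype.sum_prod_type,
    ite_mul, zero_mul, one_mul, mul_ite, mul_zero, Finset.sum_ite_eq, Finset.sum_ite_eq',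
    Finset.mem_univ, if_true, hamp]
  simp only [sum_ite_pull, Finset.sum_ite_eq, Finset.sum_ite_eq', Finset.mem_univ, if_true, hamp]

lemma amp_one {k : ℕ} (ψ : Matrix (Fin n) (Fin n) ℂ →ₗ[ℂ] Matrix (Fin m) (Fin m) ℂ)
    (hψ1 : ψ 1 = 1) : amp (ψ ·) k 1 = 1 := by
  ext p q
  show ψ (fun a c => (1 : Matrix (Fin k × Fin n) (Fin k × Fin n) ℂ) (p.1, a) (q.1, c)) p.2 q.2
      = (1 : Matrix (Fin k × Fin m) (Fin k × Fin m) ℂ) p q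
  by_cases h : p.1 = q.1
  · have hsl : (fun a c => (1 : Matrix (Fin k × Fin n) (Fin k × Fin n) ℂ) (p.1, a) (q.1, c))
        = (1 : Matrix (Fin n) (Fin n) ℂ) := by
      funext a c
      simp [Matrix.one_apply, h, Prod.ext_iff]
    rw [hsl, hψ1, Matrix.one_apply, Matrix.one_apply]
    simp [Prod.ext_iff, h]
  · have hsl : (fun a c => (1 : Matrix (Fin k × Fin n) (Fin k × Fin n) ℂ) (p.1, a) (q.1, c))
        = (0 : Matrix (Fin n) (Fin n) ℂ) := by
      funext a c
      simp [Matrix.one_apply, Prod.ext_iff, h]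
    rw [hsl, map_zero]
    simp [Matrix.one_apply, Prod.ext_iff, h]

lemma amp_sub {k : ℕ} (ψ : Matrix (Fin n) (Fin n) ℂ →ₗ[ℂ] Matrix (Fin m) (Fin m) ℂ)
    (M N : Matrix (Fin k × Fin n) (Fin k × Fin n) ℂ) :
    amp (ψ ·) k (M - N) = amp (ψ ·) k M - amp (ψ ·) k N := by
  ext p q
  show ψ (fun a c => (M - N) (p.1, a) (q.1, c)) p.2 q.2 = _
  have hsl : (fun a c => (M - N) (p.1, a) (q.1, c))
      = (fun a c => M (p.1, a) (q.1, c)) - (fun a c => N (p.1, a) (q.1, c)) := by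
    funext a c
    simp [Matrix.sub_apply]
  rw [hsl]
  exact congrFun (congrFun (map_sub ψ _ _) p.2) q.2

open scoped MatrixOrder in
lemma exists_sqrt_psd {A : Matrix (Fin m) (Fin m) ℂ} (hA : A.PosSemidef) :
    ∃ b : Matrix (Fin m) (Fin m) ℂ, b.PosSemidef ∧ b * b = A :=
  ⟨CFC.sqrt A, (CFC.sqrt_nonneg A).posSemidef, CFC.sqrt_mul_sqrt_self A hA.nonneg⟩

end Stmt11Aux

set_option maxHeartbeats 1000000 in
open Stmt11Aux in
/-- if `r > 0` and every unital positive map `φ : Mₙ(ℂ) → M_m(ℂ)` satisfies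
`‖φ‖_cb ≤ 1/r`, then for every self-adjoint `x ∈ Mₙ ⊗ M_m` with `‖x‖ ≤ r` the element
`1ₙ ⊗ 1_m − x` is separable. -/
theorem stmt11 (n m : ℕ) (r : ℝ) (hr : 0 < r)
    (hcb : ∀ φ : Matrix (Fin n) (Fin n) ℂ →ₗ[ℂ] Matrix (Fin m) (Fin m) ℂ,
      (∀ M : Matrix (Fin n) (Fin n) ℂ, M.PosSemidef → (φ M).PosSemidef) →
      φ 1 = 1 →
      ∀ (k : ℕ) (M : Matrix (Fin k × Fin n) (Fin k × Fin n) ℂ),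
        ‖amp (φ ·) k M‖ ≤ (1 / r) * ‖M‖) :
    ∀ x : Matrix (Fin n × Fin m) (Fin n × Fin m) ℂ,
      x.IsHermitian → ‖x‖ ≤ r → (1 - x) ∈ Separable n m := by
  intro x hxh hxr
  by_contra hns
  have hzero : (0 : Matrix (Fin n × Fin m) (Fin n × Fin m) ℂ) ∈ Separable n m :=
    subset_closure zero_mem_S0
  rcases Nat.eq_zero_or_pos n with hn | hn
  · subst hn
    refine hns ?_
    have h0 : (1 - x : Matrix (Fin 0 × Fin m) (Fin 0 × Fin m) ℂ) = 0 := by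
      ext ⟨a, b⟩ _
      exact a.elim0
    rw [h0]; exact hzero
  rcases Nat.eq_zero_or_pos m with hm | hm
  · subst hm
    refine hns ?_
    have h0 : (1 - x) = 0 := by
      ext ⟨a, b⟩ _
      exact b.elim0
    rw [h0]; exact hzero
  -- Hahn–Banach separation
  obtain ⟨f, u, hfu, hux⟩ :=
    geometric_hahn_banach_closed_point ((convex_S0 (n := n) (m := m)).closure)
      isClosed_closure hns
  have hu0 : 0 < u := by simpa using hfu 0 hzero
  have hf0 : ∀ a ∈ S0 n m, f a ≤ 0 := by
    intro a ha
    by_contra hpos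
    push_neg at hpos
    have ht : (0 : ℝ) < (u + 1) / f a := div_pos (by linarith) hpos
    have h2 := hfu _ (subset_closure (smul_mem_S0 ht.le ha))
    rw [f.map_smul, smul_eq_mul, div_mul_cancel₀ _ (ne_of_gt hpos)] at h2
    linarith
  set y : Matrix (Fin n × Fin m) (Fin n × Fin m) ℂ := 1 - x with hy
  have hyh : y.IsHermitian := Matrix.isHermitian_one.sub hxh
  have hfy : 0 < f y := lt_trans hu0 hux
  set T : ℝ := (y.trace).re with hT
  set ε : ℝ := f y / (2 * (|T| + 1)) with hεdef
  have hε : 0 < ε := div_pos hfy (by positivity)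
  set W := Wof f with hW
  set Vh : Matrix (Fin n × Fin m) (Fin n × Fin m) ℂ :=
    (-(1/2 : ℝ)) • (W + Wᴴ) + ε • 1 with hVhdef
  have hVh : Vh.IsHermitian := by
    show Vhᴴ = Vh
    rw [hVhdef, conjTranspose_add, Matrix.conjTranspose_smul, Matrix.conjTranspose_smul,
      conjTranspose_add, conjTranspose_conjTranspose, Matrix.conjTranspose_one,
      add_comm Wᴴ W]
    simp
  -- the value of the functional
  have hval : ∀ A : Matrix (Fin n × Fin m) (Fin n × Fin m) ℂ, A.IsHermitian →
      ((Vh * A).trace).re = -(f A) + ε * (A.trace).re := by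
    intro A hA
    have hsplit : Vh * A = (-(1/2 : ℝ)) • (W * A) + (-(1/2 : ℝ)) • (Wᴴ * A) + ε • A := by
      rw [hVhdef, Matrix.add_mul, Matrix.smul_mul, Matrix.smul_mul, Matrix.add_mul,
        Matrix.one_mul, smul_add]
    have h2 : ((Wᴴ * A).trace).re = f A := by
      have hstar : star ((Wᴴ * A).trace) = ((W * A).trace) := by
        rw [← Matrix.trace_conjTranspose, conjTranspose_mul, conjTranspose_conjTranspose, hA.eq,
          Matrix.trace_mul_comm]
      have := congrArg Complex.re hstar
      rw [Complex.star_def, Complex.conj_re] at this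
      rw [this, re_trace_Wof_mul f A]
    rw [hsplit, Matrix.trace_add, Matrix.trace_add, Matrix.trace_smul, Matrix.trace_smul,
      Matrix.trace_smul]
    simp only [Complex.add_re, Complex.real_smul, Complex.mul_re, Complex.ofReal_re,
      Complex.ofReal_im, zero_mul, sub_zero]
    rw [re_trace_Wof_mul f A, h2]
    ring
  -- block positivity
  have hblock : ∀ (A : Matrix (Fin n) (Fin n) ℂ) (B : Matrix (Fin m) (Fin m) ℂ),
      A.PosSemidef → B.PosSemidef → 0 ≤ ((Vh * (A ⊗ₖ B)).trace).re := by
    intro A B hA hB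
    have h1 : f (A ⊗ₖ B) ≤ 0 := hf0 _ (prod_mem_S0 hA hB)
    have h2 : 0 ≤ ((A ⊗ₖ B).trace).re := by
      rw [Matrix.trace_kronecker]
      have := mul_nonneg (trace_nonneg_of_psd hA) (trace_nonneg_of_psd hB)
      exact (Complex.le_def.mp this).1
    rw [hval _ (kron_isHermitian hA.1 hB.1)]
    nlinarith
  -- the positive map
  have hφPSD : ∀ A : Matrix (Fin n) (Fin n) ℂ, A.PosSemidef → (phiFun Vh A).PosSemidef := by
    intro A hA
    refine .of_dotProduct_mulVec_nonneg (phiFun_isHermitian hVh hA.1) fun v => ?_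
    rw [phiFun_quad]
    have hM : (vecMulVec (star v) v).PosSemidef := psd_vecMulVec v
    rw [trace_mul_real hVh (kron_isHermitian hA.1 hM.1)]
    have := hblock _ _ hA hM
    exact_mod_cast this
  -- positive definiteness of φ(1)
  have hc : (phiFun Vh 1).PosDef := by
    refine .of_dotProduct_mulVec_pos (phiFun_isHermitian hVh Matrix.isHermitian_one) fun v hv => ?_
    rw [phiFun_quad]
    have hM : (vecMulVec (star v) v).PosSemidef := psd_vecMulVec v
    rw [trace_mul_real hVh (kron_isHermitian Matrix.isHermitian_one hM.1)]
    have h1 : f ((1 : Matrix (Fin n) (Fin n) ℂ) ⊗ₖ vecMulVec (star v) v) ≤ 0 :=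
      hf0 _ (prod_mem_S0 Matrix.PosSemidef.one hM)
    have h2 : ((1 : Matrix (Fin n) (Fin n) ℂ) ⊗ₖ vecMulVec (star v) v).trace
        = (n : ℂ) * dotProduct (star v) v := by
      rw [Matrix.trace_kronecker, Matrix.trace_one]
      congr 1
      simp [Matrix.trace, Matrix.diag, vecMulVec_apply, dotProduct]
    have h3 : 0 < (dotProduct (star v) v).re := by
      rw [quad_self]
      have hne : (WithLp.equiv 2 (Fin m → ℂ)).symm v ≠ 0 := by
        simpa using hv
      have := norm_pos_iff.mpr hne
      positivity
    have h4 : ((Vh * ((1 : Matrix (Fin n) (Fin n) ℂ) ⊗ₖ vecMulVec (star v) v)).trace).re > 0 := by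
      rw [hval _ (kron_isHermitian Matrix.isHermitian_one hM.1), h2]
      have h5 : ((n : ℂ) * dotProduct (star v) v).re
          = (n : ℝ) * (dotProduct (star v) v).re := by
        simp [Complex.mul_re]
      rw [h5]
      have hn0 : (0 : ℝ) < (n : ℝ) := by exact_mod_cast hn
      have hprod := mul_pos hε (mul_pos hn0 h3)
      linarith
    exact_mod_cast h4
  -- the normalizing square root
  set c : Matrix (Fin m) (Fin m) ℂ := phiFun Vh 1 with hcdef
  have hcinv : (c⁻¹).PosDef := hc.inv
  obtain ⟨b, hbps, hbb⟩ := exists_sqrt_psd hcinv.posSemidef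
  have hdetc : IsUnit c.det := hc.isUnit.map (Matrix.detMonoidHom)
  have hdetb : IsUnit b.det := by
    have h1 : IsUnit (c⁻¹).det := hcinv.isUnit.map (Matrix.detMonoidHom)
    rw [← hbb, Matrix.det_mul] at h1
    exact isUnit_mul_self_iff.mp h1
  have hbcb : b * c * b = 1 := by
    have hc_eq : c = b⁻¹ * b⁻¹ := by
      rw [← Matrix.mul_inv_rev, hbb, Matrix.nonsing_inv_nonsing_inv _ hdetc]
    rw [hc_eq, ← Matrix.mul_assoc, Matrix.mul_assoc (b * b⁻¹), Matrix.mul_nonsing_inv _ hdetb,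
      Matrix.nonsing_inv_mul _ hdetb, Matrix.one_mul]
  -- the unital positive map ψ
  set ψ : Matrix (Fin n) (Fin n) ℂ →ₗ[ℂ] Matrix (Fin m) (Fin m) ℂ :=
    { toFun := fun A => b * phiFun Vh A * b,
      map_add' := fun A B => by
        have h : phiFun Vh (A + B) = phiFun Vh A + phiFun Vh B := (phiLin Vh).map_add A B
        rw [h, Matrix.mul_add, Matrix.add_mul]
      map_smul' := fun r A => by
        have h : phiFun Vh (r • A) = r • phiFun Vh A := (phiLin Vh).map_smul r A
        rw [h, RingHom.id_apply, Matrix.mul_smul, Matrix.smul_mul] } with hψdef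
  have hψfun : (ψ ·) = fun A => b * phiFun Vh A * b := rfl
  have hψpos : ∀ M : Matrix (Fin n) (Fin n) ℂ, M.PosSemidef → (ψ M).PosSemidef := by
    intro M hM
    have h1 : (bᴴ * phiFun Vh M * b).PosSemidef :=
      (hφPSD M hM).conjTranspose_mul_mul_same b
    rwa [hbps.1.eq] at h1
  have hψ1 : ψ 1 = 1 := by
    show b * phiFun Vh 1 * b = 1
    rw [← hcdef, hbcb]
  -- norm bound on the amplification
  have hub := hcb ψ hψpos hψ1 m (swapMat x)
  have hswx : ‖swapMat x‖ = ‖x‖ := l2_opNorm_submatrix _ x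
  have hZ1 : ‖amp (ψ ·) m (swapMat x)‖ ≤ 1 := by
    rw [hswx] at hub
    calc ‖amp (ψ ·) m (swapMat x)‖ ≤ 1 / r * ‖x‖ := hub
      _ ≤ 1 / r * r := by
          exact mul_le_mul_of_nonneg_left hxr (by positivity)
      _ = 1 := by field_simp
  -- kronecker conjugators
  set a : Matrix (Fin m) (Fin m) ℂ := b⁻¹ with hadef
  have haH : a.IsHermitian := by
    show aᴴ = a
    rw [hadef, Matrix.conjTranspose_nonsing_inv, hbps.1.eq]
  set Ka : Matrix (Fin m × Fin m) (Fin m × Fin m) ℂ := (1 : Matrix (Fin m) (Fin m) ℂ) ⊗ₖ a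
    with hKadef
  set Kb : Matrix (Fin m × Fin m) (Fin m × Fin m) ℂ := (1 : Matrix (Fin m) (Fin m) ℂ) ⊗ₖ b
    with hKbdef
  have hKaKb : Ka * Kb = 1 := by
    rw [hKadef, hKbdef, ← Matrix.mul_kronecker_mul, Matrix.one_mul,
      Matrix.nonsing_inv_mul _ hdetb, Matrix.one_kronecker_one]
  have hKbKa : Kb * Ka = 1 := by
    rw [hKadef, hKbdef, ← Matrix.mul_kronecker_mul, Matrix.one_mul,
      Matrix.mul_nonsing_inv _ hdetb, Matrix.one_kronecker_one]
  have hampφψ : ∀ M : Matrix (Fin m × Fin n) (Fin m × Fin n) ℂ,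
      amp (phiFun Vh) m M = Ka * amp (ψ ·) m M * Ka := by
    intro M
    have h1 : amp (ψ ·) m M = Kb * amp (phiFun Vh) m M * Kb := by
      rw [hψfun]
      exact amp_conj b (phiFun Vh) M
    rw [h1, ← Matrix.mul_assoc, ← Matrix.mul_assoc, hKaKb, Matrix.one_mul, Matrix.mul_assoc,
      hKbKa, Matrix.mul_one]
  set ω : Fin m × Fin m → ℂ := omega m with hωdef
  set ωa : Fin m × Fin m → ℂ := Ka *ᵥ ω with hωadef
  have hKaH : Kaᴴ = Ka := by
    rw [hKadef, kron_conjTranspose, Matrix.conjTranspose_one, haH.eq]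
  have hdot : ∀ Z : Matrix (Fin m × Fin m) (Fin m × Fin m) ℂ,
      dotProduct (star ω) ((Ka * Z * Ka) *ᵥ ω)
        = dotProduct (star ωa) (Z *ᵥ ωa) := by
    intro Z
    rw [hωadef, Matrix.star_mulVec, hKaH]
    rw [← dotProduct_mulVec, ← Matrix.mulVec_mulVec, ← Matrix.mulVec_mulVec]
  -- strict negativity
  have hneg : ((Vh * y).trace).re < 0 := by
    rw [hval y hyh, ← hT]
    have h1 : ε * T ≤ ε * |T| := by
      have := le_abs_self T
      nlinarith
    have h2 : ε * |T| < f y := by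
      rw [hεdef, div_mul_eq_mul_div, div_lt_iff₀ (by positivity)]
      nlinarith [abs_nonneg T]
    linarith
  -- assembling the contradiction
  have hswy : swapMat y = (1 : Matrix (Fin m × Fin n) (Fin m × Fin n) ℂ) - swapMat x := by
    ext p q
    simp only [swapMat, Matrix.submatrix_apply, hy, Matrix.sub_apply, Matrix.one_apply,
      EmbeddingLike.apply_eq_iff_eq]
  have hamp_y : amp (ψ ·) m (swapMat y) = 1 - amp (ψ ·) m (swapMat x) := by
    rw [hswy, amp_sub ψ, amp_one ψ hψ1]
  have hfinal : ((Vh * y).trace).re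
      = (dotProduct (star ωa) ωa).re
        - (dotProduct (star ωa) ((amp (ψ ·) m (swapMat x)) *ᵥ ωa)).re := by
    rw [← main_identity Vh y, hampφψ (swapMat y), hdot, hamp_y, Matrix.sub_mulVec,
      dotProduct_sub, Matrix.one_mulVec, Complex.sub_re]
  have hq1 : (dotProduct (star ωa) ωa).re
      = ‖(WithLp.equiv 2 (Fin m × Fin m → ℂ)).symm ωa‖ ^ 2 := quad_self ωa
  have hq2 : (dotProduct (star ωa) ((amp (ψ ·) m (swapMat x)) *ᵥ ωa)).re
      ≤ ‖(WithLp.equiv 2 (Fin m × Fin m → ℂ)).symm ωa‖ ^ 2 := by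
    refine le_trans (quad_re_le _ _) ?_
    have := sq_nonneg ‖(WithLp.equiv 2 (Fin m × Fin m → ℂ)).symm ωa‖
    nlinarith
  rw [hfinal] at hneg
  linarith [hq1 ▸ hneg]
end
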